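/- arXiv:1807.10310 — 6 statements merged into one kernel-verified Lean document; each statement's English description precedes it below -/
import Mathlib

section
/- For every rational number r > 1 there exist a unique integer n ≥ 1 and unique integers a_1, …, a_n, all satisfying a_i ≥ 2, such that r = [a_1, …, a_n]^-. -/
/-- Negative continued fraction `[a_1, …, a_n]^-`:
`[a_n]^- = a_n` and `[a_i, …, a_n]^- = a_i − 1/[a_{i+1}, …, a_n]^-`. -/
noncomputable def ncf : List ℝ → ℝ
  | [] => 0
  | [a] => a
  | a :: b :: l => a - 1 / ncf (b :: l)

lemma ncf_cons (a : ℝ) (l : List ℝ) (h : l ≠ []) :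
    ncf (a :: l) = a - 1 / ncf l := by
  cases l with
  | nil => exact absurd rfl h
  | cons b l' => rfl

/-- clean form of the coerced map -/
noncomputable def rmap (L : List ℤ) : List ℝ := L.map (fun z : ℤ => (z : ℝ))

lemma conv_map (L : List ℤ) : (L.map fun b => (b : ℝ)) = rmap L := by
  induction L with
  | nil => simp [rmap]
  | cons a l ih => simpa [rmap] using ih

lemma ncf_gt_one : ∀ L : List ℤ, L ≠ [] → (∀ b ∈ L, 2 ≤ b) → 1 < ncf (rmap L) := by
  intro L
  induction L with
  | nil => intro h; exact absurd rfl h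
  | cons a l ih =>
    intro _ hb
    have ha : (2 : ℝ) ≤ (a : ℝ) := by exact_mod_cast hb a (by simp)
    cases l with
    | nil =>
      simp only [rmap, List.map_cons, List.map_nil, ncf]
      linarith
    | cons b l' =>
      have h1 : 1 < ncf (rmap (b :: l')) :=
        ih (by simp) (fun x hx => hb x (List.mem_cons_of_mem _ hx))
      have h2 : 0 < 1 / ncf (rmap (b :: l')) := by positivity
      have h3 : 1 / ncf (rmap (b :: l')) < 1 := by
        rw [div_lt_one (by linarith)]; linarith
      show 1 < ncf ((a : ℝ) :: rmap (b :: l'))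
      rw [ncf_cons _ _ (by simp [rmap])]
      linarith

lemma ncf_unique : ∀ L M : List ℤ, L ≠ [] → (∀ b ∈ L, 2 ≤ b) →
    M ≠ [] → (∀ b ∈ M, 2 ≤ b) → ncf (rmap L) = ncf (rmap M) → L = M := by
  intro L
  induction L with
  | nil => intro M h; exact absurd rfl h
  | cons a l ih =>
    intro M _ hL hM0 hM heq
    cases M with
    | nil => exact absurd rfl hM0
    | cons c m =>
      cases l with
      | nil =>
        cases m with
        | nil =>
          have : (a : ℝ) = (c : ℝ) := by simpa [rmap, ncf] using heq
          have : a = c := by exact_mod_cast this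
          simp [this]
        | cons d m' =>
          exfalso
          have hy : 1 < ncf (rmap (d :: m')) :=
            ncf_gt_one _ (by simp) (fun x hx => hM x (List.mem_cons_of_mem _ hx))
          have heq' : (a : ℝ) = (c : ℝ) - 1 / ncf (rmap (d :: m')) := by
            have e1 : ncf (rmap [a]) = (a : ℝ) := by simp [rmap, ncf]
            have e2 : ncf (rmap (c :: d :: m'))
                = (c : ℝ) - 1 / ncf (rmap (d :: m')) := by
              show ncf ((c : ℝ) :: rmap (d :: m')) = _
              rw [ncf_cons _ _ (by simp [rmap])]
            rw [e1, e2] at heq; exact heq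
          have h2 : 0 < 1 / ncf (rmap (d :: m')) := by positivity
          have h3 : 1 / ncf (rmap (d :: m')) < 1 := by
            rw [div_lt_one (by linarith)]; linarith
          have h4 : (c : ℝ) - 1 < (a : ℝ) := by linarith
          have h5 : (a : ℝ) < (c : ℝ) := by linarith
          have h4' : c - 1 < a := by exact_mod_cast h4
          have h5' : a < c := by exact_mod_cast h5
          omega
      | cons b l' =>
        have hx : 1 < ncf (rmap (b :: l')) :=
          ncf_gt_one _ (by simp) (fun x hx => hL x (List.mem_cons_of_mem _ hx))
        have h2 : 0 < 1 / ncf (rmap (b :: l')) := by positivity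
        have h3 : 1 / ncf (rmap (b :: l')) < 1 := by
          rw [div_lt_one (by linarith)]; linarith
        have eL : ncf (rmap (a :: b :: l'))
            = (a : ℝ) - 1 / ncf (rmap (b :: l')) := by
          show ncf ((a : ℝ) :: rmap (b :: l')) = _
          rw [ncf_cons _ _ (by simp [rmap])]
        cases m with
        | nil =>
          exfalso
          have heq' : (a : ℝ) - 1 / ncf (rmap (b :: l')) = (c : ℝ) := by
            have e1 : ncf (rmap [c]) = (c : ℝ) := by simp [rmap, ncf]
            rw [eL, e1] at heq; exact heq
          have h4 : (a : ℝ) - 1 < (c : ℝ) := by linarith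
          have h5 : (c : ℝ) < (a : ℝ) := by linarith
          have h4' : a - 1 < c := by exact_mod_cast h4
          have h5' : c < a := by exact_mod_cast h5
          omega
        | cons d m' =>
          have hy : 1 < ncf (rmap (d :: m')) :=
            ncf_gt_one _ (by simp) (fun x hx => hM x (List.mem_cons_of_mem _ hx))
          have k2 : 0 < 1 / ncf (rmap (d :: m')) := by positivity
          have k3 : 1 / ncf (rmap (d :: m')) < 1 := by
            rw [div_lt_one (by linarith)]; linarith
          have eM : ncf (rmap (c :: d :: m'))
              = (c : ℝ) - 1 / ncf (rmap (d :: m')) := by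
            show ncf ((c : ℝ) :: rmap (d :: m')) = _
            rw [ncf_cons _ _ (by simp [rmap])]
          have heq' : (a : ℝ) - 1 / ncf (rmap (b :: l'))
              = (c : ℝ) - 1 / ncf (rmap (d :: m')) := by
            rw [eL, eM] at heq; exact heq
          have h4 : (a : ℝ) - 1 < (c : ℝ) := by linarith
          have h5 : (c : ℝ) - 1 < (a : ℝ) := by linarith
          have h4' : a - 1 < c := by exact_mod_cast h4
          have h5' : c - 1 < a := by exact_mod_cast h5
          have hac : a = c := by omega
          subst hac
          have htails : ncf (rmap (b :: l')) = ncf (rmap (d :: m')) := by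
            have hinv : (ncf (rmap (b :: l')))⁻¹ = (ncf (rmap (d :: m')))⁻¹ := by
              rw [← one_div, ← one_div]; linarith
            exact inv_injective hinv
          have := ih (d :: m') (by simp)
            (fun x hx => hL x (List.mem_cons_of_mem _ hx)) (by simp)
            (fun x hx => hM x (List.mem_cons_of_mem _ hx)) htails
          rw [this]

lemma den_add_int (r : ℚ) (n : ℤ) : (r + n).den = r.den := by
  have h1 : ((r + n).den : ℤ) ∣ r.den := by
    have := Rat.add_den_dvd r n
    simpa using Int.natCast_dvd_natCast.mpr this
  have h2 : (r.den : ℤ) ∣ (r + n).den := by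
    have := Rat.add_den_dvd (r + n) (-n : ℤ)
    simp at this
    simpa using Int.natCast_dvd_natCast.mpr this
  have := Int.dvd_antisymm (by positivity) (by positivity) h1 h2
  exact_mod_cast this

lemma ncf_exists : ∀ q : ℕ, ∀ r : ℚ, r.den = q → 1 < r →
    ∃ L : List ℤ, L ≠ [] ∧ (∀ b ∈ L, 2 ≤ b) ∧ ncf (rmap L) = (r : ℝ) := by
  intro q
  induction q using Nat.strong_induction_on with
  | _ q ih =>
    intro r hq hr
    by_cases hden : r.den = 1
    · refine ⟨[r.num], by simp, ?_, ?_⟩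
      · intro b hb
        simp at hb
        subst hb
        have : (1 : ℚ) < r.num := by rwa [Rat.coe_int_num_of_den_eq_one hden]
        exact_mod_cast this
      · have e1 : ncf (rmap [r.num]) = (r.num : ℝ) := by simp [rmap, ncf]
        rw [e1]
        exact_mod_cast congrArg (Rat.cast : ℚ → ℝ) (Rat.coe_int_num_of_den_eq_one hden)
    · set a : ℤ := ⌈r⌉ with ha
      have hrlt : r < a := by
        rcases lt_or_eq_of_le (Int.le_ceil r) with h | h
        · exact_mod_cast h
        · exfalso; apply hden
          rw [h]; simp
      have hage : 2 ≤ a := by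
        have : (1 : ℚ) < a := lt_trans hr hrlt
        exact_mod_cast this
      set t : ℚ := (a : ℚ) - r with ht
      have ht0 : 0 < t := by rw [ht]; linarith
      have ht1 : t < 1 := by
        have := Int.ceil_lt_add_one r
        rw [ht]; push_cast at this ⊢; linarith
      set s : ℚ := t⁻¹ with hs
      have hs1 : 1 < s := one_lt_inv_iff₀.mpr ⟨ht0, ht1⟩
      have htden : t.den = r.den := by
        have h' : t = -r + a := by rw [ht]; ring
        rw [h', den_add_int, Rat.neg_den]
      have hnum_pos : 0 < t.num := Rat.num_pos.mpr ht0
      have hnum_lt : t.num < (t.den : ℤ) := by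
        by_contra h
        push_neg at h
        have : (1 : ℚ) ≤ t := by
          rw [← Rat.num_div_den t]
          rw [le_div_iff₀ (by exact_mod_cast t.pos)]
          simpa using by exact_mod_cast h
        linarith
      have hsden : s.den < r.den := by
        have hdvd : ((s.den : ℤ)) ∣ t.num := by
          rw [hs, Rat.inv_def]
          exact Rat.den_dvd _ _
        have hle : (s.den : ℤ) ≤ t.num := Int.le_of_dvd hnum_pos hdvd
        have h2 : (s.den : ℤ) < (t.den : ℤ) := lt_of_le_of_lt hle hnum_lt
        rw [htden] at h2
        exact_mod_cast h2
      rw [hq] at hsden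
      obtain ⟨M, hM0, hMb, hMv⟩ := ih s.den hsden s rfl hs1
      refine ⟨a :: M, by simp, ?_, ?_⟩
      · intro b hb
        rcases List.mem_cons.mp hb with h | h
        · subst h; exact hage
        · exact hMb b h
      · show ncf ((a : ℝ) :: rmap M) = (r : ℝ)
        rw [ncf_cons _ _ (by simpa [rmap] using hM0), hMv]
        have hts : (t : ℚ) ≠ 0 := ne_of_gt ht0
        have e2 : (1 : ℝ) / (s : ℝ) = (t : ℝ) := by
          rw [hs]
          push_cast
          rw [one_div, inv_inv]
        rw [e2, ht]
        push_cast
        ring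

/-- For every rational `r > 1` there exist a unique `n ≥ 1` and unique integers
`a_1, …, a_n`, all `≥ 2`, with `r = [a_1, …, a_n]^-`. -/
theorem stmt0 (r : ℚ) (hr : 1 < r) :
    ∃! L : List ℤ, L ≠ [] ∧ (∀ b ∈ L, 2 ≤ b) ∧
      ncf (L.map fun b => (b : ℝ)) = (r : ℝ) := by
  simp only [conv_map]
  obtain ⟨L, h1, h2, h3⟩ := ncf_exists r.den r rfl hr
  refine ⟨L, ⟨h1, h2, h3⟩, ?_⟩
  intro M ⟨m1, m2, m3⟩
  exact ncf_unique M L m1 m2 h1 h2 (by rw [m3, h3])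
end

section
/- Let n ≥ 1 and for each i ∈ {1, …, n} let A_i be an l_i × l_i real matrix and w_i ∈ ℝ^{l_i} a column vector. Let A be the square matrix of size 1 + l_1 + ⋯ + l_n whose top-left entry is 1, whose first row consists (after the top-left entry) of the blocks w_1ᵀ, …, w_nᵀ, whose first column consists (after the top-left entry) of the blocks w_1, …, w_n, whose remaining diagonal blocks are A_1, …, A_n, and whose remaining entries are 0. Then det A = ∏_{i=1}^n det A_i + ∑_{i=1}^n det(B_i) · ∏_{j ≠ i} det A_j, where B_i is the (l_i+1)×(l_i+1) matrix obtained from A_i by bordering it with first row (0, w_iᵀ) and first column (0, w_iᵀ)ᵀ. -/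
open Matrix

section BD

/-- transfer `blockDiagonal'` determinant along an equiv of the index type. -/
lemma bd_reindex {ι κ : Type} [Fintype ι] [DecidableEq ι] [Fintype κ] [DecidableEq κ]
    (e : ι ≃ κ) (f : κ → ℕ) (M : ∀ k, Matrix (Fin (f k)) (Fin (f k)) ℝ) :
    (blockDiagonal' fun a => M (e a)).det = (blockDiagonal' M).det := by
  rw [← det_submatrix_equiv_self (Equiv.sigmaCongrLeft (β := fun k => Fin (f k)) e)
    (blockDiagonal' M)]
  congr 1
  ext ⟨a, x⟩ ⟨a', x'⟩
  rcases eq_or_ne a a' with rfl | h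
  · simp [blockDiagonal'_apply_eq, Equiv.sigmaCongrLeft]
  · simp [blockDiagonal'_apply_ne _ _ _ h,
      blockDiagonal'_apply_ne _ _ _ (e.injective.ne h), Equiv.sigmaCongrLeft]

/-- splitting a sigma type over an `Option`. -/
def optSigmaEquiv {ι : Type} (g : Option ι → Type) :
    (Σ o : Option ι, g o) ≃ (g none ⊕ Σ a : ι, g (some a)) where
  toFun p := match p with
    | ⟨none, x⟩ => Sum.inl x
    | ⟨some a, x⟩ => Sum.inr ⟨a, x⟩
  invFun q := match q with
    | Sum.inl x => ⟨none, x⟩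
    | Sum.inr ⟨a, x⟩ => ⟨some a, x⟩
  left_inv := by rintro ⟨_ | a, x⟩ <;> rfl
  right_inv := by rintro (x | ⟨a, x⟩) <;> rfl

lemma det_bd_option {ι : Type} [Fintype ι] [DecidableEq ι] (f : Option ι → ℕ)
    (M : ∀ o, Matrix (Fin (f o)) (Fin (f o)) ℝ) :
    (blockDiagonal' M).det = (M none).det * (blockDiagonal' fun a => M (some a)).det := by
  have : blockDiagonal' M =
      (fromBlocks (M none) 0 0 (blockDiagonal' fun a => M (some a))).submatrix
        (optSigmaEquiv fun o => Fin (f o)) (optSigmaEquiv fun o => Fin (f o)) := by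
    ext ⟨o, x⟩ ⟨o', x'⟩
    match o, o' with
    | none, none => simp [optSigmaEquiv, blockDiagonal'_apply_eq]
    | none, some a' =>
        simp [optSigmaEquiv, blockDiagonal'_apply_ne _ _ _ (by simp : (none : Option ι) ≠ some a')]
    | some a, none =>
        simp [optSigmaEquiv, blockDiagonal'_apply_ne _ _ _ (by simp : (some a : Option ι) ≠ none)]
    | some a, some a' =>
      rcases eq_or_ne a a' with rfl | h
      · simp [optSigmaEquiv, blockDiagonal'_apply_eq]
      · simp [optSigmaEquiv,
          blockDiagonal'_apply_ne _ _ _ (by simp [h] : (some a : Option ι) ≠ some a'),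
          blockDiagonal'_apply_ne _ _ _ h]
  rw [this, det_submatrix_equiv_self, det_fromBlocks_zero₂₁]

lemma det_bd_fin : ∀ (n : ℕ) (f : Fin n → ℕ) (M : ∀ i, Matrix (Fin (f i)) (Fin (f i)) ℝ),
    (blockDiagonal' M).det = ∏ i, (M i).det := by
  intro n
  induction n with
  | zero => intro f M; rw [Matrix.det_isEmpty, Finset.prod_of_isEmpty]
  | succ n ih =>
    intro f M
    rw [← bd_reindex (finSuccEquiv n).symm f M, det_bd_option, ih, Fin.prod_univ_succ]
    rfl

/-- determinant of a dependent block diagonal matrix. -/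
lemma det_bd {ι : Type} [Fintype ι] [DecidableEq ι] (f : ι → ℕ)
    (M : ∀ i, Matrix (Fin (f i)) (Fin (f i)) ℝ) :
    (blockDiagonal' M).det = ∏ i, (M i).det := by
  obtain ⟨e⟩ := Fintype.truncEquivFin ι
  rw [← bd_reindex e.symm f M, det_bd_fin, ← Equiv.prod_comp e.symm fun i => (M i).det]

end BD

/-- multilinearity of the determinant in one row, for a finite sum. -/
lemma det_updateRow_finset_sum {m : Type} [Fintype m] [DecidableEq m] (M : Matrix m m ℝ)
    (r : m) {α : Type} (s : Finset α) (u : α → m → ℝ) :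
    (M.updateRow r (∑ a ∈ s, u a)).det = ∑ a ∈ s, (M.updateRow r (u a)).det := by
  classical
  induction s using Finset.induction with
  | empty =>
      simp only [Finset.sum_empty]
      exact Matrix.det_eq_zero_of_row_eq_zero r (fun j => by simp)
  | insert _ _ h ih =>
      rw [Finset.sum_insert h, Matrix.det_updateRow_add, ih, Finset.sum_insert h]

/-- The square matrix of size `1 + l_1 + ⋯ + l_n` with top-left entry `1`, first row
(after the corner) the blocks `w_1ᵀ, …, w_nᵀ`, first column (after the corner) the
blocks `w_1, …, w_n`, remaining diagonal blocks `A_1, …, A_n`, and zeros elsewhere. -/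
noncomputable def bigA {n : ℕ} (l : Fin n → ℕ)
    (A : ∀ i, Matrix (Fin (l i)) (Fin (l i)) ℝ) (w : ∀ i, Fin (l i) → ℝ) :
    Matrix (Option (Σ i, Fin (l i))) (Option (Σ i, Fin (l i))) ℝ :=
  Matrix.of fun p q =>
    match p, q with
    | none, none => 1
    | none, some ⟨i, j⟩ => w i j
    | some ⟨i, j⟩, none => w i j
    | some ⟨i, j⟩, some ⟨i', j'⟩ =>
        if h : i = i' then A i j (Fin.cast (by rw [h]) j') else 0

/-- The `(m+1) × (m+1)` matrix obtained from `A` by bordering it with first row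
`(0, wᵀ)` and first column `(0, wᵀ)ᵀ`. -/
noncomputable def borderB {m : ℕ} (A : Matrix (Fin m) (Fin m) ℝ) (w : Fin m → ℝ) :
    Matrix (Option (Fin m)) (Option (Fin m)) ℝ :=
  Matrix.of fun p q =>
    match p, q with
    | none, none => 0
    | none, some j => w j
    | some j, none => w j
    | some j, some j' => A j j'

section Main

variable {n : ℕ} (l : Fin n → ℕ)
  (A : ∀ i, Matrix (Fin (l i)) (Fin (l i)) ℝ) (w : ∀ i, Fin (l i) → ℝ)

def rowE : Option (Σ j, Fin (l j)) → ℝ := fun q =>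
  match q with | none => 1 | some _ => 0

def rowV (i : Fin n) : Option (Σ j, Fin (l j)) → ℝ := fun q =>
  match q with
  | none => 0
  | some ⟨j, k⟩ => if j = i then w j k else 0

lemma bigA_row_none : bigA l A w none = rowE l + ∑ i, rowV l w i := by
  funext q
  rcases q with _ | ⟨j, k⟩
  · simp [bigA, rowE, rowV]
  · simp only [bigA, rowE, rowV, Matrix.of_apply, Pi.add_apply, Finset.sum_apply,
      zero_add]
    rw [Finset.sum_ite_eq Finset.univ j (fun _ => w j k)]
    simp

def optE : Option (Σ j, Fin (l j)) ≃ (Unit ⊕ Σ j, Fin (l j)) where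
  toFun p := match p with
    | none => Sum.inl ()
    | some x => Sum.inr x
  invFun q := match q with
    | Sum.inl _ => none
    | Sum.inr x => some x
  left_inv := by rintro (_ | x) <;> rfl
  right_inv := by rintro (_ | x) <;> rfl

lemma detE : ((bigA l A w).updateRow none (rowE l)).det = ∏ i, (A i).det := by
  have key : (bigA l A w).updateRow none (rowE l) =
      (fromBlocks (1 : Matrix Unit Unit ℝ) 0
        (Matrix.of fun (p : Σ j, Fin (l j)) (_ : Unit) => w p.1 p.2)
        (blockDiagonal' A)).submatrix (optE l) (optE l) := by
    ext p q
    rcases p with _ | ⟨j, k⟩ <;> rcases q with _ | ⟨j', k'⟩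
    · simp [optE, rowE]
    · simp [optE, rowE]
    · simp [optE, bigA, Matrix.updateRow_apply]
    · rcases eq_or_ne j j' with rfl | h
      · simp [optE, bigA, Matrix.updateRow_apply, blockDiagonal'_apply_eq]
      · simp [optE, bigA, Matrix.updateRow_apply, h, blockDiagonal'_apply_ne _ _ _ h]
  rw [key, det_submatrix_equiv_self, det_fromBlocks_zero₁₂, det_one, one_mul, det_bd]

def eqvI (i : Fin n) :
    Option (Σ j, Fin (l j)) ≃ (Option (Fin (l i)) ⊕ Σ j : {j : Fin n // j ≠ i}, Fin (l j.1)) where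
  toFun p := match p with
    | none => Sum.inl none
    | some ⟨j, k⟩ =>
        if h : j = i then Sum.inl (some (Fin.cast (congrArg l h) k)) else Sum.inr ⟨⟨j, h⟩, k⟩
  invFun q := match q with
    | Sum.inl none => none
    | Sum.inl (some k) => some ⟨i, k⟩
    | Sum.inr ⟨⟨j, _⟩, k⟩ => some ⟨j, k⟩
  left_inv := by
    rintro (_ | ⟨j, k⟩)
    · rfl
    · by_cases h : j = i
      · subst h; simp
      · simp [h]
  right_inv := by
    rintro ((_ | k) | ⟨⟨j, h⟩, k⟩)
    · rfl
    · simp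
    · simp [h]

lemma detV (i : Fin n) : ((bigA l A w).updateRow none (rowV l w i)).det =
    (borderB (A i) (w i)).det * ∏ j ∈ Finset.univ.erase i, (A j).det := by
  have key : (bigA l A w).updateRow none (rowV l w i) =
      (fromBlocks (borderB (A i) (w i)) 0
        (Matrix.of fun (p : Σ j : {j : Fin n // j ≠ i}, Fin (l j.1)) (q : Option (Fin (l i))) =>
          match q with | none => w p.1.1 p.2 | some _ => 0)
        (blockDiagonal' fun j : {j : Fin n // j ≠ i} => A j.1)).submatrix (eqvI l i) (eqvI l i) := by
    ext p q
    rcases p with _ | ⟨j, k⟩ <;> rcases q with _ | ⟨j', k'⟩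
    · simp [eqvI, rowV, borderB]
    · by_cases h : j' = i
      · subst h; simp [eqvI, rowV, borderB]
      · simp [eqvI, rowV, borderB, h]
    · by_cases h : j = i
      · subst h; simp [eqvI, bigA, borderB, Matrix.updateRow_apply]
      · simp [eqvI, bigA, borderB, Matrix.updateRow_apply, h]
    · by_cases h : j = i <;> by_cases h' : j' = i
      · subst h; subst h'
        simp [eqvI, bigA, borderB, Matrix.updateRow_apply]
      · subst h
        simp [eqvI, bigA, borderB, Matrix.updateRow_apply, h', Ne.symm h']
      · subst h'
        simp [eqvI, bigA, borderB, Matrix.updateRow_apply, h]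
      · rcases eq_or_ne j j' with rfl | hne
        · simp [eqvI, bigA, Matrix.updateRow_apply, h, h', blockDiagonal'_apply_eq]
        · have : (⟨j, h⟩ : {j : Fin n // j ≠ i}) ≠ ⟨j', h'⟩ := by
            simp [Subtype.ext_iff, hne]
          simp [eqvI, bigA, Matrix.updateRow_apply, h, h', hne,
            blockDiagonal'_apply_ne _ _ _ this]
  rw [key, det_submatrix_equiv_self, det_fromBlocks_zero₁₂, det_bd]
  congr 1
  exact (Finset.prod_subtype _ (fun x => by simp) fun j => (A j).det).symm

end Main

/-- `det A = ∏ᵢ det Aᵢ + ∑ᵢ det Bᵢ · ∏_{j ≠ i} det Aⱼ`, where `A` is the bordered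
block matrix and `Bᵢ` is `Aᵢ` bordered by `wᵢ`. -/
theorem stmt6 (n : ℕ) (hn : 1 ≤ n) (l : Fin n → ℕ)
    (A : ∀ i, Matrix (Fin (l i)) (Fin (l i)) ℝ) (w : ∀ i, Fin (l i) → ℝ) :
    (bigA l A w).det =
      ∏ i, (A i).det +
        ∑ i, (borderB (A i) (w i)).det * ∏ j ∈ Finset.univ.erase i, (A j).det := by
  conv_lhs => rw [← Matrix.updateRow_eq_self (bigA l A w) none, bigA_row_none l A w]
  rw [Matrix.det_updateRow_add, det_updateRow_finset_sum, detE]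
  congr 1
  exact Finset.sum_congr rfl fun i _ => detV l A w i
end

section
/- Let h and l be integers with 2 ≤ l ≤ h, and let a_1, …, a_h be integers with a_i ≥ 2 for all i. Let u and v be integers such that u ≠ 0, such that v = 0 only if l = h, and such that if u = −v and u² = 1 then l > 2 or a_1 > 2. Set p = D(a_1, …, a_h), q = D(a_2, …, a_h), P = D(a_1, …, a_l) and Q = u²·D(a_2, …, a_l) + 2uv + v²·D(a_1, …, a_{l−1}). Then Q/P ≥ q/p, and equality holds only if u² = 1 and v = 0. -/
/-- Tridiagonal determinant `D(a_1, …, a_n)`. -/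
def D : List ℤ → ℤ
  | [] => 1
  | [a] => a
  | a :: b :: l => a * D (b :: l) - D l


lemma D_nil : D [] = 1 := rfl
lemma D_single (a : ℤ) : D [a] = a := rfl
lemma D_cc (a b : ℤ) (l : List ℤ) : D (a :: b :: l) = a * D (b :: l) - D l := rfl

lemma D_cons (a : ℤ) (x : List ℤ) (hx : x ≠ []) :
    D (a :: x) = a * D x - D x.tail := by
  match x with
  | b :: y => rfl

lemma sq_one_le {n : ℤ} (h : n ≠ 0) : 1 ≤ n ^ 2 := by
  nlinarith [Int.one_le_abs h, sq_abs n, abs_nonneg n]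

lemma D_strict : ∀ (x : List ℤ), (∀ b ∈ x, 2 ≤ b) →
    1 ≤ D x ∧ ∀ c : ℤ, 2 ≤ c → D x + 1 ≤ D (c :: x)
  | [], _ => ⟨le_refl 1, fun c hc => by simpa [D] using hc⟩
  | b :: y, h => by
    have hy := D_strict y (fun c hc => h c (List.mem_cons_of_mem _ hc))
    have hb : 2 ≤ b := h b (List.mem_cons_self)
    have h1 : D y + 1 ≤ D (b :: y) := hy.2 b hb
    have hpos : 1 ≤ D (b :: y) := by linarith [hy.1]
    refine ⟨hpos, fun c hc => ?_⟩
    rw [D_cc]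
    nlinarith [hy.1]

lemma D_pos {x : List ℤ} (h : ∀ b ∈ x, 2 ≤ b) : 1 ≤ D x := (D_strict x h).1

lemma D_ge_len : ∀ (x : List ℤ), (∀ b ∈ x, 2 ≤ b) → (x.length : ℤ) + 1 ≤ D x
  | [], _ => by simp [D]
  | b :: y, h => by
    have hy := D_ge_len y (fun c hc => h c (List.mem_cons_of_mem _ hc))
    have h1 := (D_strict y (fun c hc => h c (List.mem_cons_of_mem _ hc))).2 b
      (h b (List.mem_cons_self))
    simp only [List.length_cons]
    push_cast
    linarith

lemma D_head_le (b : ℤ) (y : List ℤ) (h : ∀ c ∈ b :: y, 2 ≤ c) : b ≤ D (b :: y) := by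
  cases y with
  | nil => simp [D]
  | cons c y' =>
    have hy : ∀ d ∈ c :: y', 2 ≤ d := fun d hd => h d (List.mem_cons_of_mem _ hd)
    have h1 := (D_strict y' (fun d hd => hy d (List.mem_cons_of_mem _ hd))).2 c
      (hy c (List.mem_cons_self))
    have h2 : 1 ≤ D y' := D_pos (fun d hd => hy d (List.mem_cons_of_mem _ hd))
    have hb : 2 ≤ b := h b (List.mem_cons_self)
    rw [D_cc]
    nlinarith

lemma D_drop_le : ∀ (k : ℕ) (x : List ℤ), (∀ b ∈ x, 2 ≤ b) → D (x.drop k) ≤ D x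
  | 0, x, _ => le_refl _
  | k + 1, [], _ => le_refl _
  | k + 1, b :: y, h => by
    have hy : ∀ c ∈ y, 2 ≤ c := fun c hc => h c (List.mem_cons_of_mem _ hc)
    have h1 := D_drop_le k y hy
    have h2 := (D_strict y hy).2 b (h b (List.mem_cons_self))
    simpa using by linarith

lemma D_append : ∀ (x : List ℤ) (y : List ℤ), x ≠ [] → y ≠ [] →
    D (x ++ y) = D x * D y - D x.dropLast * D y.tail
  | [], y, hx, _ => absurd rfl hx
  | [a], y, _, hy => by
    rw [List.singleton_append, D_cons a y hy]; simp [D]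
  | [a, b], y, _, hy => by
    have h1 : D ([a, b] ++ y) = a * D (b :: y) - D y := rfl
    rw [h1, D_cons b y hy]
    simp [D]; ring
  | a :: b :: c :: x', y, _, hy => by
    have ih1 := D_append (b :: c :: x') y (by simp) hy
    have ih2 := D_append (c :: x') y (by simp) hy
    have e1 : D ((a :: b :: c :: x') ++ y) =
        a * D ((b :: c :: x') ++ y) - D ((c :: x') ++ y) := rfl
    have e2 : (a :: b :: c :: x').dropLast = a :: (b :: c :: x').dropLast := rfl
    have e3 : (b :: c :: x').dropLast = b :: (c :: x').dropLast := rfl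
    rw [e1, ih1, ih2, e2, e3, D_cc a b (c::x'), D_cc a b ((c::x').dropLast), D_cc b c x']
    ring

lemma D_det : ∀ (x : List ℤ), 2 ≤ x.length →
    D x.dropLast * D x.tail - D x * D x.tail.dropLast = 1
  | [], hx => by simp at hx
  | [a], hx => by simp at hx
  | [a, b], _ => by simp [D]
  | a :: b :: c :: y', _ => by
    have ih := D_det (b :: c :: y') (by simp)
    have e2 : (a :: b :: c :: y').dropLast = a :: (b :: c :: y').dropLast := rfl
    have e3 : (b :: c :: y').dropLast = b :: (c :: y').dropLast := rfl
    simp only [List.tail_cons] at ih ⊢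
    rw [e3] at ih
    rw [e2, e3, D_cc a b ((c :: y').dropLast), D_cc a b (c :: y')]
    linear_combination ih

lemma W_lemma (A B u v : ℤ) (hA : 2 ≤ A) (hB : 2 ≤ B) (hu : u ≠ 0)
    (hBc : u = -v → u ^ 2 = 1 → 2 < B) :
    0 ≤ (u ^ 2 - 1) * A + 2 * u * v + v ^ 2 * B ∧
      ((u ^ 2 - 1) * A + 2 * u * v + v ^ 2 * B = 0 → u ^ 2 = 1 ∧ v = 0) := by
  have hu2 : 1 ≤ u ^ 2 := sq_one_le hu
  by_cases hv0 : v = 0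
  · subst hv0
    constructor
    · nlinarith
    · intro h0
      refine ⟨?_, rfl⟩
      nlinarith
  · have hv2 : 1 ≤ v ^ 2 := sq_one_le hv0
    by_cases huv : u = -v
    · by_cases hu1 : u ^ 2 = 1
      · have hB3 := hBc huv hu1
        have hv1 : v ^ 2 = 1 := by rw [huv] at hu1; nlinarith
        constructor
        · nlinarith
        · intro h0; exfalso; nlinarith
      · have hn1 : u ≠ -1 := fun e => hu1 (by rw [e]; ring)
        have hp1 : u ≠ 1 := fun e => hu1 (by rw [e]; ring)
        have hu4 : 4 ≤ u ^ 2 := by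
          rcases (by omega : u ≤ -2 ∨ 2 ≤ u) with h | h
          · nlinarith
          · nlinarith
        constructor
        · nlinarith
        · intro h0; exfalso; nlinarith
    · have hsum : u + v ≠ 0 := fun h0 => huv (by linarith)
      have hs2 : 1 ≤ (u + v) ^ 2 := sq_one_le hsum
      constructor
      · nlinarith
      · intro h0; exfalso; nlinarith

lemma tail_append_ne (w y : List ℤ) (hw : w ≠ []) : (w ++ y).tail = w.tail ++ y := by
  cases w with
  | nil => exact absurd rfl hw
  | cons c w' => simp

/-- With `p = D(a_1,…,a_h)`, `q = D(a_2,…,a_h)`, `P = D(a_1,…,a_l)` and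
`Q = u²·D(a_2,…,a_l) + 2uv + v²·D(a_1,…,a_{l−1})`, one has `Q/P ≥ q/p`, with
equality only if `u² = 1` and `v = 0`. -/
theorem stmt10 (h l : ℕ) (hl : 2 ≤ l) (hlh : l ≤ h)
    (a : Fin h → ℤ) (ha : ∀ i, 2 ≤ a i)
    (u v : ℤ) (hu : u ≠ 0) (hv : v = 0 → l = h)
    (huv : u = -v → u ^ 2 = 1 → 2 < l ∨ 2 < a ⟨0, by omega⟩) :
    ((D (List.ofFn a).tail : ℝ) / (D (List.ofFn a) : ℝ) ≤
      ((u ^ 2 * D (((List.ofFn a).take l).tail) + 2 * u * v +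
          v ^ 2 * D ((List.ofFn a).take (l - 1)) : ℤ) : ℝ) /
        (D ((List.ofFn a).take l) : ℝ)) ∧
    (((u ^ 2 * D (((List.ofFn a).take l).tail) + 2 * u * v +
          v ^ 2 * D ((List.ofFn a).take (l - 1)) : ℤ) : ℝ) /
        (D ((List.ofFn a).take l) : ℝ) =
        (D (List.ofFn a).tail : ℝ) / (D (List.ofFn a) : ℝ) →
      u ^ 2 = 1 ∧ v = 0) := by
  set L := List.ofFn a with hLdef
  have hmem : ∀ b ∈ L, 2 ≤ b := by
    intro b hb
    rw [hLdef, List.mem_ofFn] at hb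
    obtain ⟨i, rfl⟩ := hb
    exact ha i
  have hLlen : L.length = h := by simp [hLdef]
  set x := L.take l with hxdef
  have hxlen : x.length = l := by
    rw [hxdef, List.length_take, hLlen]; omega
  have hxmem : ∀ b ∈ x, 2 ≤ b := fun b hb => hmem b ((List.take_sublist l L).subset hb)
  have hxtmem : ∀ b ∈ x.tail, 2 ≤ b := fun b hb => hxmem b ((List.tail_sublist x).subset hb)
  have hxdmem : ∀ b ∈ x.dropLast, 2 ≤ b := fun b hb => hxmem b ((List.dropLast_sublist x).subset hb)
  have hLtmem : ∀ b ∈ L.tail, 2 ≤ b := fun b hb => hmem b ((List.tail_sublist L).subset hb)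
  have htake : L.take (l - 1) = x.dropLast := by
    rw [List.dropLast_eq_take, hxlen, hxdef, List.take_take]
    congr 1
    omega
  rw [htake]
  -- abbreviations
  set P := D x with hP
  set P' := D x.tail with hP'
  set P'' := D x.dropLast with hP''
  set P''' := D x.tail.dropLast with hP'''
  set p := D L with hp
  set q := D L.tail with hq
  -- basic bounds
  have hPge : (l : ℤ) + 1 ≤ P := by rw [hP, ← hxlen]; exact_mod_cast D_ge_len x hxmem
  have hPpos : 0 < P := by
    have h2l : (2:ℤ) ≤ (l:ℤ) := by exact_mod_cast hl
    linarith
  have hppos : 0 < p := by linarith [D_pos hmem]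
  have hP'ge : 2 ≤ P' := by
    have := D_ge_len x.tail hxtmem
    rw [List.length_tail, hxlen] at this
    have h2 : (1:ℤ) ≤ (l - 1 : ℕ) := by exact_mod_cast Nat.one_le_iff_ne_zero.mpr (by omega)
    linarith
  have hP''ge : 2 ≤ P'' := by
    have := D_ge_len x.dropLast hxdmem
    rw [List.length_dropLast, hxlen] at this
    have h2 : (1:ℤ) ≤ (l - 1 : ℕ) := by exact_mod_cast Nat.one_le_iff_ne_zero.mpr (by omega)
    linarith
  -- the huv condition gives 2 < P'' when u = -v and u^2 = 1
  have hBc : u = -v → u ^ 2 = 1 → 2 < P'' := by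
    intro h1 h2
    rcases huv h1 h2 with h3 | h3
    · -- 2 < l, so P'' ≥ (l-1)+1 = l > 2
      have := D_ge_len x.dropLast hxdmem
      rw [List.length_dropLast, hxlen] at this
      have h4 : (2:ℤ) ≤ (l - 1 : ℕ) := by exact_mod_cast (by omega : 2 ≤ l - 1)
      linarith
    · -- 2 < a 0, head of x.dropLast is a 0
      cases hxd : x.dropLast with
      | nil =>
        exfalso
        have := congrArg List.length hxd
        rw [List.length_dropLast, hxlen] at this
        simp at this
        omega
      | cons b t =>
        have hb0 : b = a ⟨0, by omega⟩ := by
          have h5 : (L.take (l-1))[0]? = some b := by rw [htake, hxd]; simp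
          rw [List.getElem?_take_of_lt (by omega), hLdef, List.getElem?_ofFn] at h5
          rw [dif_pos (show 0 < h by omega)] at h5
          exact (Option.some.injEq _ _ ▸ h5).symm
        have h6 := D_head_le b t (by rw [← hxd]; exact hxdmem)
        rw [← hxd] at h6
        rw [hP'']
        omega
  obtain ⟨hW1, hW2⟩ := W_lemma P' P'' u v hP'ge hP''ge hu hBc
  set W := (u ^ 2 - 1) * P' + 2 * u * v + v ^ 2 * P'' with hWdef
  set Q := u ^ 2 * P' + 2 * u * v + v ^ 2 * P'' with hQdef
  have hQW : Q = W + P' := by rw [hQdef, hWdef]; ring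
  -- key integer facts
  have key : q * P ≤ Q * p ∧ (q * P = Q * p → u ^ 2 = 1 ∧ v = 0) := by
    rcases eq_or_lt_of_le hlh with heq | hlt
    · -- l = h
      have hxL : x = L := by rw [hxdef, heq, ← hLlen, List.take_length]
      have hPp : P = p := by rw [hP, hp, hxL]
      have hP'q : P' = q := by rw [hP', hq, hxL]
      constructor
      · have : q ≤ Q := by rw [hQW, hP'q]; linarith
        calc q * P = q * p := by rw [hPp]
          _ ≤ Q * p := by nlinarith
      · intro he
        rw [hPp] at he
        have hqQ : q = Q := mul_right_cancel₀ (by linarith) he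
        have : W = 0 := by rw [hQW, hP'q] at hqQ; linarith
        exact hW2 this
    · -- l < h
      set y := L.drop l with hydef
      have hyne : y ≠ [] := by
        rw [hydef]
        apply List.ne_nil_of_length_pos
        rw [List.length_drop, hLlen]
        omega
      have hxne : x ≠ [] := by
        apply List.ne_nil_of_length_pos
        rw [hxlen]; omega
      have hxtne : x.tail ≠ [] := by
        apply List.ne_nil_of_length_pos
        rw [List.length_tail, hxlen]; omega
      have hsplit : L = x ++ y := (List.take_append_drop l L).symm
      have htail : L.tail = x.tail ++ y := by
        rw [hsplit]
        exact tail_append_ne x y hxne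
      have e1 : p = P * D y - P'' * D y.tail := by
        rw [hp]
        conv_lhs => rw [hsplit]
        exact D_append x y hxne hyne
      have e2 : q = P' * D y - P''' * D y.tail := by
        rw [hq, htail]
        exact D_append x.tail y hxtne hyne
      have e3 : P'' * P' - P * P''' = 1 := by
        have := D_det x (by rw [hxlen]; exact hl)
        rw [← hP, ← hP', ← hP'', ← hP'''] at this
        exact this
      have ekey : Q * p - q * P = W * p - D y.tail := by
        rw [e1, e2, hQdef, hWdef]
        linear_combination (-(D y.tail)) * e3
      have hvne : v ≠ 0 := fun h0 => absurd (hv h0) (by omega)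
      have hWge1 : 1 ≤ W := by
        rcases eq_or_lt_of_le hW1 with h0 | h0
        · exact absurd (hW2 h0.symm).2 hvne
        · omega
      have hS0 : D y.tail ≤ q := by
        have hyt : y.tail = L.tail.drop l := by
          rw [hydef, List.tail_drop, ← (List.drop_one : List.drop 1 L = L.tail), List.drop_drop]
          congr 1
          omega
        rw [hyt, hq]
        exact D_drop_le l L.tail hLtmem
      have hqp : q + 1 ≤ p := by
        cases hLc : L with
        | nil => exfalso; rw [hLc] at hLlen; simp at hLlen; omega
        | cons c L' =>
          have hc : 2 ≤ c := hmem c (by rw [hLc]; exact List.mem_cons_self)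
          have := (D_strict L' (fun d hd => hmem d (by rw [hLc]; exact List.mem_cons_of_mem _ hd))).2 c hc
          rw [hp, hq, hLc]
          simpa using this
      have hstrict : q * P + 1 ≤ Q * p := by
        have h1 : p ≤ W * p := le_mul_of_one_le_left (by linarith) hWge1
        linarith [ekey]
      exact ⟨by linarith, fun he => absurd he (by linarith)⟩
  obtain ⟨key1, key2⟩ := key
  have hpR : (0:ℝ) < (p : ℝ) := by exact_mod_cast hppos
  have hPR : (0:ℝ) < (P : ℝ) := by exact_mod_cast hPpos
  constructor
  · rw [div_le_div_iff₀ hpR hPR]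
    exact_mod_cast key1
  · intro heq
    apply key2
    rw [div_eq_div_iff hPR.ne' hpR.ne'] at heq
    exact_mod_cast heq.symm
end

section
/- Let k ≥ 3 and e ≥ 1 be integers, let h_1, …, h_k ≥ 1 and let a^i_j (1 ≤ i ≤ k, 1 ≤ j ≤ h_i) be integers with every a^i_j ≥ 2, and set p_i = D(a^i_1, …, a^i_{h_i}) and q_i = D(a^i_2, …, a^i_{h_i}). If there exist m ≥ 1 and a (1 + h_1 + ⋯ + h_k) × m integer matrix M with M·Mᵀ = Q_Γ(e), then there is a partition of {1, 2, …, k} into at most e nonempty classes such that for each class C one has ∑_{i∈C} q_i/p_i ≤ 1. (This is the lattice-theoretic content of Theorem 1.1: when the Seifert fibered space Y = S²(e; p_1/q_1, …, p_k/q_k) in standard form bounds a smooth 4-manifold W with σ(W) = −b_2(W) and with H_1(Y;ℚ) → H_1(W;ℚ) injective, Donaldson's theorem produces such a matrix M.) -/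
open Matrix

/-- The `n×n` tridiagonal matrix with diagonal entries `a_1, …, a_n` and entries `−1`
immediately above and below the diagonal. -/
def tridiag {n : ℕ} (a : Fin n → ℤ) : Matrix (Fin n) (Fin n) ℤ :=
  Matrix.of fun i j =>
    if i = j then a i
    else if (i : ℕ) + 1 = (j : ℕ) ∨ (j : ℕ) + 1 = (i : ℕ) then -1 else 0

/-- The star-shaped plumbing matrix `Q_Γ(e)`: central vertex of weight `e` joined to
the starting vertex of each of the `k` linear chains with weights `a^i_1, …, a^i_{l i}`. -/
def QGamma {k : ℕ} (e : ℤ) (l : Fin k → ℕ) (a : ∀ i, Fin (l i) → ℤ) :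
    Matrix (Option (Σ i, Fin (l i))) (Option (Σ i, Fin (l i))) ℤ :=
  Matrix.of fun p q =>
    match p, q with
    | none, none => e
    | none, some ⟨_, j⟩ => if (j : ℕ) = 0 then -1 else 0
    | some ⟨_, j⟩, none => if (j : ℕ) = 0 then -1 else 0
    | some s, some t =>
        if h : s.1 = t.1 then tridiag (a s.1) s.2 (Fin.cast (by rw [h]) t.2) else 0




/-- end-recursion continuant -/
def Pc (a : ℕ → ℤ) : ℕ → ℤ
  | 0 => 1
  | 1 => a 0
  | (n+2) => a (n+1) * Pc a (n+1) - Pc a n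

def Qc (a : ℕ → ℤ) : ℕ → ℤ
  | 0 => 0
  | (n+1) => Pc (fun i => a (i+1)) n

lemma Qc_rec (a : ℕ → ℤ) (n : ℕ) : Qc a (n+2) = a (n+1) * Qc a (n+1) - Qc a n := by
  cases n with
  | zero => simp [Qc, Pc]
  | succ n => simp [Qc, Pc]

lemma Pc_aux (a : ℕ → ℤ) (ha : ∀ i, 2 ≤ a i) : ∀ n, 1 ≤ Pc a n ∧ Pc a n + 1 ≤ Pc a (n+1) := by
  intro n
  induction n with
  | zero => simpa [Pc] using ha 0
  | succ n ih =>
    obtain ⟨h1, h2⟩ := ih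
    refine ⟨by omega, ?_⟩
    have hrec : Pc a (n+2) = a (n+1) * Pc a (n+1) - Pc a n := rfl
    have := ha (n+1)
    nlinarith

lemma Pc_succ_ge (a : ℕ → ℤ) (ha : ∀ i, 2 ≤ a i) : ∀ n, Pc a n + 1 ≤ Pc a (n+1) :=
  fun n => (Pc_aux a ha n).2

lemma Pc_pos (a : ℕ → ℤ) (ha : ∀ i, 2 ≤ a i) : ∀ n, 1 ≤ Pc a n :=
  fun n => (Pc_aux a ha n).1

lemma Qc_pos (a : ℕ → ℤ) (ha : ∀ i, 2 ≤ a i) (n : ℕ) : 1 ≤ Qc a (n+1) := by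
  simpa [Qc] using Pc_pos (fun i => a (i+1)) (fun i => ha _) n

lemma Qc_nonneg (a : ℕ → ℤ) (ha : ∀ i, 2 ≤ a i) (n : ℕ) : 0 ≤ Qc a n := by
  cases n with
  | zero => simp [Qc]
  | succ n => have := Qc_pos a ha n; omega

/-- the continuant identity `p_{n+1} q_n - p_n q_{n+1} = -1`. -/
lemma PQ_ident (a : ℕ → ℤ) : ∀ n, Pc a (n+1) * Qc a n - Pc a n * Qc a (n+1) = -1 := by
  intro n
  induction n with
  | zero => simp [Pc, Qc]
  | succ n ih =>
    have hrec : Pc a (n+2) = a (n+1) * Pc a (n+1) - Pc a n := rfl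
    rw [Qc_rec, hrec]
    linear_combination ih

/-- front recursion for Pc -/
lemma Pc_front : ∀ (n : ℕ) (a : ℕ → ℤ), Pc a (n+2) = a 0 * Pc (fun i => a (i+1)) (n+1) - Pc (fun i => a (i+2)) n := by
  intro n
  induction n using Nat.strong_induction_on with
  | _ n ih =>
    intro a
    match n with
    | 0 => simp [Pc]; ring
    | 1 => simp [Pc]; ring
    | (n+2) =>
      have h1 := ih (n+1) (by omega) a
      have h0 := ih n (by omega) a
      calc Pc a (n+2+2) = a (n+3) * Pc a (n+3) - Pc a (n+2) := rfl
        _ = a 0 * Pc (fun i => a (i+1)) (n+3) - Pc (fun i => a (i+2)) (n+2) := by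
            rw [h1, h0]
            have e1 : Pc (fun i => a (i+1)) (n+3) = a (n+3) * Pc (fun i => a (i+1)) (n+2) - Pc (fun i => a (i+1)) (n+1) := rfl
            have e2 : Pc (fun i => a (i+2)) (n+2) = a (n+3) * Pc (fun i => a (i+2)) (n+1) - Pc (fun i => a (i+2)) n := rfl
            rw [e1, e2]; ring

lemma D_ofFn (n : ℕ) (a : ℕ → ℤ) : D (List.ofFn (fun j : Fin n => a j)) = Pc a n := by
  induction n using Nat.strong_induction_on generalizing a with
  | _ n ih =>
    match n with
    | 0 => simp [D, Pc]
    | 1 => simp [D, Pc]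
    | (n+2) =>
      rw [List.ofFn_succ, List.ofFn_succ]
      have h1 := ih (n+1) (by omega) (fun i => a (i+1))
      have h0 := ih n (by omega) (fun i => a (i+2))
      rw [List.ofFn_succ] at h1
      simp only [Fin.val_succ, Fin.val_zero] at *
      show a 0 * D _ - D _ = _
      rw [Pc_front]
      rw [← h1, ← h0]


lemma tridiag_apply {n : ℕ} (a : Fin n → ℤ) (i j : Fin n) :
    tridiag a i j = if i = j then a i
    else if (i : ℕ) + 1 = (j : ℕ) ∨ (j : ℕ) + 1 = (i : ℕ) then -1 else 0 := rfl

lemma tridiag_shift {n n' : ℕ} (c : ℕ) (a : Fin n → ℤ) (a' : Fin n' → ℤ)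
    (i j : Fin n) (i' j' : Fin n') (hi : (i : ℕ) = (i' : ℕ) + c) (hj : (j : ℕ) = (j' : ℕ) + c)
    (hd : a i = a' i') : tridiag a i j = tridiag a' i' j' := by
  simp only [tridiag_apply, Fin.ext_iff, hd]
  by_cases h : (i' : ℕ) = (j' : ℕ)
  · rw [if_pos (by omega), if_pos h]
  · rw [if_neg (by omega), if_neg h]
    by_cases h2 : (i' : ℕ) + 1 = (j' : ℕ) ∨ (j' : ℕ) + 1 = (i' : ℕ)
    · rw [if_pos (by omega), if_pos h2]
    · rw [if_neg (by omega), if_neg h2]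

lemma tridiag_symm {n : ℕ} (a : Fin n → ℤ) : (tridiag a).transpose = tridiag a := by
  ext i j
  simp only [transpose_apply, tridiag_apply]
  by_cases h : i = j
  · simp [h]
  · rw [if_neg (Ne.symm h), if_neg h]
    by_cases h2 : (i : ℕ) + 1 = (j : ℕ) ∨ (j : ℕ) + 1 = (i : ℕ)
    · rw [if_pos h2.symm, if_pos h2]
    · rw [if_neg (fun hc => h2 hc.symm), if_neg h2]

lemma tridiag_submatrix_succ {n : ℕ} (a : Fin (n+1) → ℤ) :
    (tridiag a).submatrix Fin.succ Fin.succ = tridiag (fun i => a i.succ) := by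
  ext i j
  simp only [submatrix_apply]
  exact tridiag_shift 1 a _ i.succ j.succ i j (by simp) (by simp) rfl

lemma tridiag_submatrix_castSucc {n : ℕ} (a : Fin (n+1) → ℤ) :
    (tridiag a).submatrix Fin.castSucc Fin.castSucc = tridiag (fun i => a i.castSucc) := by
  ext i j
  simp only [submatrix_apply]
  exact tridiag_shift 0 a _ i.castSucc j.castSucc i j (by simp) (by simp) rfl

lemma det_tridiag (a : ℕ → ℤ) : ∀ n, (tridiag (fun j : Fin n => a j)).det = Pc a n := by
  intro n
  induction n using Nat.strong_induction_on generalizing a with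
  | _ n ih =>
    match n with
    | 0 => simp [Pc]
    | 1 => rw [det_fin_one]; simp [tridiag_apply, Pc]
    | (n+2) =>
      set A := tridiag (fun j : Fin (n+2) => a j) with hA
      rw [det_succ_row_zero]
      rw [Fin.sum_univ_succ, Fin.sum_univ_succ]
      have hz : ∀ j : Fin n, ((-1:ℤ)) ^ ((j.succ.succ : Fin (n+2)) : ℕ) * A 0 j.succ.succ *
          (A.submatrix Fin.succ j.succ.succ.succAbove).det = 0 := by
        intro j
        have : A 0 j.succ.succ = 0 := by
          rw [hA, tridiag_apply, if_neg (by simp [Fin.ext_iff]), if_neg (by simp [Fin.ext_iff]; try omega)]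
        rw [this]; ring
      rw [Finset.sum_congr rfl (fun j _ => hz j), Finset.sum_const_zero, add_zero]
      have h00 : A 0 0 = a 0 := by rw [hA, tridiag_apply, if_pos rfl]; rfl
      have h01 : A 0 1 = -1 := by
        rw [hA, tridiag_apply, if_neg (by simp [Fin.ext_iff]), if_pos]
        simp [Fin.ext_iff]
        try omega
      -- first minor
      have hm0 : (A.submatrix Fin.succ (Fin.succAbove 0)).det = Pc (fun i => a (i+1)) (n+1) := by
        rw [Fin.succAbove_zero, hA, tridiag_submatrix_succ]
        have he : (fun i : Fin (n+1) => (fun j : Fin (n+2) => a ↑j) i.succ)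
            = (fun i : Fin (n+1) => (fun t : ℕ => a (t+1)) ↑i) := funext fun i => by
          simp [Fin.val_succ]
        rw [he]
        exact ih (n+1) (by omega) (fun t => a (t+1))
      -- second minor
      have hm1 : (A.submatrix Fin.succ ((1 : Fin (n+2)).succAbove)).det = - Pc (fun i => a (i+2)) n := by
        set B := A.submatrix Fin.succ ((1 : Fin (n+2)).succAbove) with hB
        rw [det_succ_column_zero, Fin.sum_univ_succ]
        have hB00 : B 0 0 = -1 := by
          rw [hB]
          simp only [submatrix_apply]
          have h1 : ((1 : Fin (n+2)).succAbove 0) = 0 := by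
            rw [Fin.succAbove_of_castSucc_lt]
            · rfl
            · simp [Fin.lt_iff_val_lt_val]
          rw [h1, hA, tridiag_apply, if_neg (by simp [Fin.ext_iff]), if_pos]
          simp [Fin.ext_iff]
        have hzB : ∀ i : Fin n, ((-1:ℤ)) ^ ((i.succ : Fin (n+1)) : ℕ) * B i.succ 0 *
            (B.submatrix i.succ.succAbove Fin.succ).det = 0 := by
          intro i
          have : B i.succ 0 = 0 := by
            rw [hB]
            simp only [submatrix_apply]
            have h1 : ((1 : Fin (n+2)).succAbove 0) = 0 := by
              rw [Fin.succAbove_of_castSucc_lt]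
              · rfl
              · simp [Fin.lt_iff_val_lt_val]
            rw [h1, hA, tridiag_apply, if_neg (by simp [Fin.ext_iff]; try omega), if_neg (by simp [Fin.ext_iff]; try omega)]
          rw [this]; ring
        rw [Finset.sum_congr rfl (fun i _ => hzB i), Finset.sum_const_zero, add_zero]
        have hmm : (B.submatrix (Fin.succAbove 0) Fin.succ) = tridiag (fun j : Fin n => a (j+2)) := by
          rw [Fin.succAbove_zero]
          ext i j
          simp only [submatrix_apply]
          have h2 : ((1 : Fin (n+2)).succAbove j.succ) = j.succ.succ := by
            rw [Fin.succAbove_of_le_castSucc]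
            simp [Fin.le_iff_val_le_val]
          rw [hB]
          simp only [submatrix_apply]
          rw [h2, hA]
          exact tridiag_shift 2 _ _ i.succ.succ j.succ.succ i j (by simp) (by simp) rfl
        rw [hmm, hB00, ih n (by omega) (fun i => a (i+2))]
        simp
      rw [Fin.succ_zero_eq_one, h00, h01, hm0, hm1, Pc_front]
      simp [Fin.val_zero, Fin.val_one]
      ring
section KeyLemma
variable {t : ℕ}

lemma mulVec_cast {n : ℕ} (A : Matrix (Fin n) (Fin n) ℤ) (x : Fin n → ℤ) :
    (A.map (Int.cast : ℤ → ℝ)) *ᵥ (fun i => (x i : ℝ)) = fun j => ((A *ᵥ x) j : ℝ) := by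
  funext j
  simp only [Matrix.mulVec, dotProduct, Matrix.map_apply]
  push_cast
  rfl

set_option maxHeartbeats 2000000 in
lemma key_lemma (a : ℕ → ℤ) (ha : ∀ i, 2 ≤ a i) :
    ∀ (n : ℕ) (hn : 0 < n) (v : Fin n → ℤ) (hv : v ⟨0, hn⟩ ≠ 0) (u : Fin n → ℝ)
    (hu : ((tridiag (fun j : Fin n => a j)).map (Int.cast : ℤ → ℝ)) *ᵥ u = fun j => (v j : ℝ)),
    ((Qc a n : ℝ) / (Pc a n : ℝ) ≤ ∑ j, u j * (v j : ℝ)) ∧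
    (∑ j, u j * (v j : ℝ) = (Qc a n : ℝ) / (Pc a n : ℝ) →
      (u ⟨n-1, by omega⟩)^2 = (((Pc a n : ℝ))⁻¹)^2) := by
  intro n
  induction n using Nat.strong_induction_on with
  | _ n ih =>
    match n with
    | 0 => intro hn; exact absurd hn (by omega)
    | 1 =>
      intro hn v hv u hu
      have h0 : (⟨0, hn⟩ : Fin 1) = 0 := rfl
      rw [h0] at hv
      have ha0 : (2:ℝ) ≤ (a 0 : ℝ) := by exact_mod_cast ha 0
      have ha0' : (0:ℝ) < (a 0 : ℝ) := by linarith
      have hrow := congrFun hu 0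
      simp only [Matrix.mulVec, dotProduct, Matrix.map_apply] at hrow
      rw [Fin.sum_univ_one] at hrow
      have h00 : tridiag (fun j : Fin 1 => a j) 0 0 = a 0 := by
        rw [tridiag_apply, if_pos rfl]; norm_num
      rw [h00] at hrow
      have hu0 : u 0 = (v 0 : ℝ) / (a 0 : ℝ) := by field_simp; linarith [hrow]
      have hv1 : (1:ℝ) ≤ (v 0 : ℝ)^2 := by
        have h1 : (1:ℤ) ≤ (v 0)^2 := by rcases lt_or_gt_of_ne hv with h|h <;> nlinarith
        exact_mod_cast h1
      have hQP : (Qc a 1 : ℝ) = 1 := by norm_num [Qc, Pc]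
      have hPP : (Pc a 1 : ℝ) = (a 0 : ℝ) := by norm_num [Pc]
      rw [Fin.sum_univ_one, hQP, hPP]
      constructor
      · rw [div_le_iff₀ ha0', hu0]
        have he2 : (v 0 : ℝ) / (a 0:ℝ) * (v 0:ℝ) * (a 0:ℝ) = (v 0:ℝ)^2 := by field_simp
        rw [he2]; linarith
      · intro heq
        rw [hu0] at heq
        have hveq : (v 0 : ℝ)^2 = 1 := by
          field_simp at heq
          nlinarith [heq]
        show (u 0)^2 = ((Pc a 1 : ℝ))⁻¹^2
        rw [hu0, div_pow, hveq, hPP]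
        norm_num
    | (t+2) =>
      intro hn v hv u hu
      -- abbreviations
      set p : ℤ := Pc a (t+2) with hp_def
      set pt : ℤ := Pc a (t+1) with hpt_def
      set pp : ℤ := Pc a t with hpp_def
      set q : ℤ := Qc a (t+2) with hq_def
      set qt : ℤ := Qc a (t+1) with hqt_def
      have hpt1 : pt + 1 ≤ p := Pc_succ_ge a ha (t+1)
      have hpp1 : pp + 1 ≤ pt := Pc_succ_ge a ha t
      have hpp_pos : 1 ≤ pp := Pc_pos a ha t
      have hpt2 : 2 ≤ pt := by omega
      have hp3 : 3 ≤ p := by omega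
      have hptR : (0:ℝ) < (pt:ℝ) := by exact_mod_cast (by omega : (0:ℤ) < pt)
      have hpR : (0:ℝ) < (p:ℝ) := by exact_mod_cast (by omega : (0:ℤ) < p)
      have hident : p * qt - pt * q = -1 := PQ_ident a (t+1)
      have hprec : p = a (t+1) * pt - pp := rfl
      -- matrices
      set AZ := tridiag (fun j : Fin (t+2) => a j) with hAZ
      set AtZ := tridiag (fun j : Fin (t+1) => a j) with hAtZ
      have hdetAt : AtZ.det = pt := det_tridiag a (t+1)
      have hsubm : ∀ i j : Fin (t+1), AZ i.castSucc j.castSucc = AtZ i j := by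
        intro i j
        rw [hAZ, hAtZ]
        exact tridiag_shift 0 _ _ i.castSucc j.castSucc i j (by simp) (by simp) rfl
      have hlastcol : ∀ i : Fin (t+1), AZ i.castSucc (Fin.last (t+1)) = if i = Fin.last t then -1 else 0 := by
        intro i
        rw [hAZ]
        by_cases hi : i = Fin.last t
        · subst hi
          rw [if_pos rfl, tridiag_apply, if_neg (by simp [Fin.ext_iff]), if_pos (by simp [Fin.ext_iff])]
        · have hiv : (i:ℕ) ≠ t := fun h => hi (Fin.ext (by simpa using h))
          rw [if_neg hi, tridiag_apply, if_neg (by simp [Fin.ext_iff]; omega), if_neg (by simp [Fin.ext_iff]; omega)]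
      have hlastrow : ∀ j : Fin (t+1), AZ (Fin.last (t+1)) j.castSucc = if j = Fin.last t then -1 else 0 := by
        intro j
        rw [hAZ]
        by_cases hj : j = Fin.last t
        · subst hj
          rw [if_pos rfl, tridiag_apply, if_neg (by simp [Fin.ext_iff]), if_pos (by simp [Fin.ext_iff])]
        · have hjv : (j:ℕ) ≠ t := fun h => hj (Fin.ext (by simpa using h))
          rw [if_neg hj, tridiag_apply, if_neg (by simp [Fin.ext_iff]; omega), if_neg (by simp [Fin.ext_iff]; omega)]
      have hdiagL : AZ (Fin.last (t+1)) (Fin.last (t+1)) = a (t+1) := by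
        rw [hAZ, tridiag_apply, if_pos rfl]; simp
      -- shortened data
      set v' : Fin (t+1) → ℤ := fun j => v j.castSucc with hv'
      set u' : Fin (t+1) → ℝ := fun j => u j.castSucc with hu'
      set uL : ℝ := u (Fin.last (t+1)) with huL
      set w : Fin (t+1) → ℤ := AtZ.adjugate *ᵥ v' with hw
      set ut : Fin (t+1) → ℝ := fun j => ((pt:ℝ))⁻¹ * ((w j : ℤ) : ℝ) with hut
      have hAtu : (AtZ.map (Int.cast : ℤ → ℝ)) *ᵥ ut = fun j => (v' j : ℝ) := by
        have h1 : (AtZ.map (Int.cast : ℤ → ℝ)) *ᵥ (fun j => ((w j : ℤ):ℝ)) = fun j => ((pt:ℝ) * (v' j : ℝ)) := by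
          rw [mulVec_cast]
          funext j
          rw [hw, Matrix.mulVec_mulVec, Matrix.mul_adjugate, hdetAt]
          simp [Matrix.smul_mulVec]
        have : ut = ((pt:ℝ))⁻¹ • (fun j => ((w j : ℤ):ℝ)) := rfl
        rw [this, Matrix.mulVec_smul, h1]
        funext j
        rw [Pi.smul_apply, smul_eq_mul, ← mul_assoc, inv_mul_cancel₀ (ne_of_gt hptR), one_mul]
      have hIH := ih (t+1) (by omega) (by omega) v' (by exact hv) ut hAtu
      -- G decomposition
      set G : ℝ := ∑ j : Fin (t+2), u j * (v j : ℝ) with hG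
      set Gt : ℝ := ∑ j : Fin (t+1), ut j * (v' j : ℝ) with hGt
      set utL : ℝ := ut (Fin.last t) with hutL
      -- rows of hu
      have hrowc : ∀ i : Fin (t+1), (∑ j : Fin (t+1), (AtZ i j : ℝ) * u' j) + (if i = Fin.last t then (-1:ℝ) else 0) * uL = (v' i : ℝ) := by
        intro i
        have hr := congrFun hu i.castSucc
        simp only [Matrix.mulVec, dotProduct, Matrix.map_apply] at hr
        rw [Fin.sum_univ_castSucc] at hr
        rw [← hr]
        congr 1
        · apply Finset.sum_congr rfl
          intro j _
          rw [hsubm i j, hu']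
        · rw [hlastcol i, huL]
          split <;> push_cast <;> ring
      have hrowL : (∑ j : Fin (t+1), (if j = Fin.last t then (-1:ℝ) else 0) * u' j) + (a (t+1) : ℝ) * uL = (v (Fin.last (t+1)) : ℝ) := by
        have hr := congrFun hu (Fin.last (t+1))
        simp only [Matrix.mulVec, dotProduct, Matrix.map_apply] at hr
        rw [Fin.sum_univ_castSucc] at hr
        rw [← hr]
        congr 1
        · apply Finset.sum_congr rfl
          intro j _
          rw [hlastrow j, hu']
          split <;> push_cast <;> ring
        · rw [hdiagL, huL]
      -- linear algebra helpers over ℝ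
      have hmapmat : AtZ.map (Int.cast : ℤ → ℝ) = (Int.castRingHom ℝ).mapMatrix AtZ := rfl
      have hdetR : (AtZ.map (Int.cast : ℤ → ℝ)).det = (pt:ℝ) := by
        rw [hmapmat, ← RingHom.map_det, hdetAt]; rfl
      have hadjR : (AtZ.map (Int.cast : ℤ → ℝ)).adjugate = AtZ.adjugate.map (Int.cast : ℤ → ℝ) := by
        rw [hmapmat, ← RingHom.map_adjugate]; rfl
      have hsymR : (AtZ.map (Int.cast : ℤ → ℝ)).transpose = AtZ.map (Int.cast : ℤ → ℝ) := by
        rw [← Matrix.transpose_map, hAtZ, tridiag_symm]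
      have hAu' : ∀ i, ((AtZ.map (Int.cast : ℤ → ℝ)) *ᵥ u') i = ∑ j, ((AtZ i j : ℤ):ℝ) * u' j := by
        intro i; simp only [Matrix.mulVec, dotProduct, Matrix.map_apply]
      have hAy : ∀ i, ((AtZ.map (Int.cast : ℤ → ℝ)) *ᵥ (u' - ut)) i = uL * (if i = Fin.last t then 1 else 0) := by
        intro i
        rw [Matrix.mulVec_sub, Pi.sub_apply, hAu' i, show ((AtZ.map (Int.cast:ℤ→ℝ)) *ᵥ ut) i = ((v' i:ℤ):ℝ) from congrFun hAtu i]
        have hrc := hrowc i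
        rcases eq_or_ne i (Fin.last t) with hEq|hNe
        · rw [if_pos hEq] at hrc ⊢; linarith
        · rw [if_neg hNe] at hrc ⊢; linarith
      -- adjugate diagonal entry
      have hadjZ : AtZ.adjugate (Fin.last t) (Fin.last t) = pp := by
        rw [Matrix.adjugate_apply, Matrix.det_succ_row _ (Fin.last t)]
        rw [Finset.sum_eq_single (Fin.last t)]
        · rw [Matrix.updateRow_self]
          rw [Pi.single_eq_same]
          have hsub : ((AtZ.updateRow (Fin.last t) (Pi.single (Fin.last t) 1)).submatrix
              (Fin.last t).succAbove (Fin.last t).succAbove) = tridiag (fun j : Fin t => a j) := by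
            rw [Fin.succAbove_last]
            ext i j
            rw [Matrix.submatrix_apply, Matrix.updateRow_ne (Fin.castSucc_lt_last i).ne]
            exact tridiag_shift 0 _ _ i.castSucc j.castSucc i j (by simp) (by simp) rfl
          rw [hsub, det_tridiag a t]
          have hev : (-1:ℤ) ^ ((Fin.last t : ℕ) + (Fin.last t : ℕ)) = 1 :=
            Even.neg_one_pow ⟨(Fin.last t : ℕ), rfl⟩
          rw [hev, hpp_def]; ring
        · intro j _ hj
          rw [Matrix.updateRow_self, Pi.single_eq_of_ne hj]
          ring
        · intro h; exact absurd (Finset.mem_univ _) h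
      -- last coordinate of y = u' - ut
      have hyLval : (pt:ℝ) * ((u' - ut) (Fin.last t)) = uL * (pp:ℝ) := by
        have h1 : ((AtZ.map (Int.cast:ℤ→ℝ)).adjugate *ᵥ ((AtZ.map (Int.cast:ℤ→ℝ)) *ᵥ (u' - ut))) = (pt:ℝ) • (u' - ut) := by
          rw [Matrix.mulVec_mulVec, Matrix.adjugate_mul, hdetR, Matrix.smul_mulVec, Matrix.one_mulVec]
        have h2 := congrFun h1 (Fin.last t)
        rw [funext hAy] at h2
        have h3 : ((AtZ.map (Int.cast:ℤ→ℝ)).adjugate *ᵥ (fun i => uL * (if i = Fin.last t then (1:ℝ) else 0))) (Fin.last t)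
            = uL * (pp:ℝ) := by
          simp only [Matrix.mulVec, dotProduct]
          rw [Finset.sum_eq_single (Fin.last t)]
          · rw [if_pos rfl, hadjR, Matrix.map_apply, hadjZ]; ring
          · intro j _ hj; rw [if_neg hj]; ring
          · intro h; exact absurd (Finset.mem_univ _) h
        rw [h3] at h2
        rw [Pi.smul_apply, smul_eq_mul] at h2
        linarith [h2]
      -- the delta identity
      set d : ℝ := ((v (Fin.last (t+1)) : ℤ):ℝ) + utL with hd
      have hdelta : (p:ℝ) * uL = (pt:ℝ) * d := by
        have hsum : (∑ j : Fin (t+1), (if j = Fin.last t then (-1:ℝ) else 0) * u' j) = - u' (Fin.last t) := by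
          rw [Finset.sum_eq_single (Fin.last t)]
          · rw [if_pos rfl]; ring
          · intro j _ hj; rw [if_neg hj]; ring
          · intro h; exact absurd (Finset.mem_univ _) h
        have h5 : - u' (Fin.last t) + (a (t+1) : ℝ) * uL = ((v (Fin.last (t+1)):ℤ):ℝ) := by
          rw [← hsum]; exact hrowL
        have hyL2 : (pt:ℝ) * (u' (Fin.last t) - ut (Fin.last t)) = uL * (pp:ℝ) := by
          rw [← hyLval]; rfl
        have hcast : (p:ℝ) = (a (t+1):ℝ) * (pt:ℝ) - (pp:ℝ) := by exact_mod_cast hprec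
        rw [hd, hutL]
        linear_combination uL * hcast + (pt:ℝ) * h5 + hyL2
      -- the dot product identity
      have hyv : ∑ j : Fin (t+1), ((u' - ut) j) * ((v' j : ℤ):ℝ) = uL * utL := by
        have e1 : ∑ j : Fin (t+1), ((u' - ut) j) * ((v' j:ℤ):ℝ) = (u' - ut) ⬝ᵥ ((AtZ.map (Int.cast:ℤ→ℝ)) *ᵥ ut) := by
          rw [hAtu]; rfl
        rw [e1, dotProduct_mulVec, ← hsymR, Matrix.vecMul_transpose, funext hAy]
        show ∑ i, (uL * (if i = Fin.last t then (1:ℝ) else 0)) * ut i = uL * utL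
        rw [Finset.sum_eq_single (Fin.last t)]
        · rw [if_pos rfl, hutL]; ring
        · intro j _ hj; rw [if_neg hj]; ring
        · intro h; exact absurd (Finset.mem_univ _) h
      -- G decomposition
      have hsplit : G = (∑ j : Fin (t+1), u' j * ((v' j:ℤ):ℝ)) + uL * ((v (Fin.last (t+1)):ℤ):ℝ) := by
        rw [hG, Fin.sum_univ_castSucc]
      have hsum2 : ∑ j : Fin (t+1), u' j * ((v' j:ℤ):ℝ) = (∑ j : Fin (t+1), (u' - ut) j * ((v' j:ℤ):ℝ)) + Gt := by
        rw [hGt, ← Finset.sum_add_distrib]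
        apply Finset.sum_congr rfl
        intro j _
        rw [Pi.sub_apply]; ring
      have hG1 : G = Gt + uL * d := by
        rw [hsplit, hsum2, hyv, hd]; ring
      have huLd : uL = (pt:ℝ) * d / (p:ℝ) := by
        field_simp
        linarith [hdelta]
      have hGdecomp : G = Gt + (pt:ℝ) * d^2 / (p:ℝ) := by
        rw [hG1, huLd]; ring
      -- integrality of Gt
      set NN : ℤ := w ⬝ᵥ v' with hNN
      have hGtN : Gt = (NN:ℝ)/(pt:ℝ) := by
        rw [hGt, hNN, dotProduct, eq_div_iff (ne_of_gt hptR), Finset.sum_mul]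
        push_cast
        apply Finset.sum_congr rfl
        intro j _
        rw [hut]
        field_simp
        try ring
      have hidentR : (p:ℝ)*(qt:ℝ) - (pt:ℝ)*(q:ℝ) = -1 := by exact_mod_cast hident
      have hNge : qt ≤ NN := by
        have h1 := hIH.1
        rw [hGtN] at h1
        have h2 : (qt:ℝ) ≤ (NN:ℝ) := (div_le_div_iff_of_pos_right hptR).mp h1
        exact_mod_cast h2
      rcases eq_or_lt_of_le hNge with hNeq | hNlt
      · -- equality case
        have hGtq : Gt = (qt:ℝ)/(pt:ℝ) := by rw [hGtN, ← hNeq]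
        have hut2 : utL^2 = (((pt:ℝ))⁻¹)^2 := hIH.2 (by rw [hGtq])
        have hfact : (utL - (pt:ℝ)⁻¹) * (utL + (pt:ℝ)⁻¹) = 0 := by linear_combination hut2
        obtain ⟨s, hs1, hs2⟩ : ∃ s : ℤ, (s = 1 ∨ s = -1) ∧ utL = (s:ℝ)/(pt:ℝ) := by
          rcases mul_eq_zero.mp hfact with h|h
          · refine ⟨1, Or.inl rfl, ?_⟩
            push_cast
            rw [eq_div_iff (ne_of_gt hptR)]
            have : utL = (pt:ℝ)⁻¹ := by linarith
            rw [this]; field_simp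
          · refine ⟨-1, Or.inr rfl, ?_⟩
            push_cast
            rw [eq_div_iff (ne_of_gt hptR)]
            have : utL = -(pt:ℝ)⁻¹ := by linarith
            rw [this]; field_simp
        set mm : ℤ := v (Fin.last (t+1)) * pt + s with hmm
        have hdm : d = (mm:ℝ)/(pt:ℝ) := by
          rw [hd, hs2, hmm]
          push_cast
          field_simp
        have hmne : mm ≠ 0 := by
          intro h0
          have hdvd : pt ∣ 1 := by
            rcases hs1 with h|h
            · subst h; exact ⟨-(v (Fin.last (t+1))), by linear_combination h0⟩
            · subst h; exact ⟨v (Fin.last (t+1)), by linear_combination -h0⟩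
          have := Int.le_of_dvd one_pos hdvd
          omega
        have hm2 : (1:ℝ) ≤ ((mm:ℝ))^2 := by
          have habs : 1 ≤ |mm| := Int.one_le_abs hmne
          have h1 : (1:ℤ) ≤ mm^2 := by
            calc (1:ℤ) = 1*1 := by ring
            _ ≤ |mm| * |mm| := mul_le_mul habs habs (by norm_num) (abs_nonneg _)
            _ = mm^2 := by rw [abs_mul_abs_self]; ring
          exact_mod_cast h1
        have hZR : (pt:ℝ) * (q:ℝ) = (p:ℝ) * (qt:ℝ) + 1 := by
          have hz : pt * q = p * qt + 1 := by linarith [hident]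
          exact_mod_cast hz
        have hqpR : (q:ℝ)/(p:ℝ) = (qt:ℝ)/(pt:ℝ) + 1/((p:ℝ)*(pt:ℝ)) := by
          have h1 : (qt:ℝ)/(pt:ℝ) = ((p:ℝ)*(qt:ℝ))/((p:ℝ)*(pt:ℝ)) := by
            rw [mul_div_mul_left _ _ (ne_of_gt hpR)]
          have h2 : (q:ℝ)/(p:ℝ) = ((pt:ℝ)*(q:ℝ))/((p:ℝ)*(pt:ℝ)) := by
            rw [mul_comm (p:ℝ), mul_div_mul_left _ _ (ne_of_gt hptR)]
          rw [h1, h2, ← add_div, hZR]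
        have hGfin : G = (qt:ℝ)/(pt:ℝ) + (mm:ℝ)^2/((p:ℝ)*(pt:ℝ)) := by
          rw [hGdecomp, hGtq, hdm]
          field_simp
        have hppt : (0:ℝ) < (p:ℝ)*(pt:ℝ) := mul_pos hpR hptR
        constructor
        · rw [hGfin, hqpR]
          have h7 : 1/((p:ℝ)*(pt:ℝ)) ≤ (mm:ℝ)^2/((p:ℝ)*(pt:ℝ)) := (div_le_div_iff_of_pos_right hppt).mpr hm2
          linarith [h7]
        · intro heq
          have hmone : ((mm:ℝ))^2 = 1 := by
            rw [hGfin, hqpR] at heq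
            have h2 : (mm:ℝ)^2/((p:ℝ)*(pt:ℝ)) = 1/((p:ℝ)*(pt:ℝ)) := by linarith
            rw [div_left_inj' (ne_of_gt hppt)] at h2
            exact h2
          have huLm : uL = (mm:ℝ)/(p:ℝ) := by
            rw [huLd, hdm]
            field_simp
          show uL^2 = (((p:ℝ))⁻¹)^2
          rw [huLm, div_pow, hmone, one_div, inv_pow]
      · -- strict case
        have hq1 : qt + 1 ≤ NN := hNlt
        have hq1R : ((qt:ℝ)+1) ≤ (NN:ℝ) := by exact_mod_cast hq1
        have hGtge : ((qt:ℝ)+1)/(pt:ℝ) ≤ Gt := by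
          rw [hGtN]
          exact (div_le_div_iff_of_pos_right hptR).mpr hq1R
        have hqlt : (q:ℝ)/(p:ℝ) < Gt := by
          refine lt_of_lt_of_le ?_ hGtge
          rw [div_lt_div_iff₀ hpR hptR]
          have hp3R : (3:ℝ) ≤ (p:ℝ) := by exact_mod_cast hp3
          nlinarith [hidentR, hp3R]
        have hGge : (q:ℝ)/(p:ℝ) < G := by
          rw [hGdecomp]
          have h6 : 0 ≤ (pt:ℝ) * d^2 / (p:ℝ) := by positivity
          linarith [hqlt, h6]
        exact ⟨le_of_lt hGge, fun heq => absurd heq (by linarith [hGge])⟩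

end KeyLemma
lemma ofFn_tail {n : ℕ} (f : Fin (n+1) → ℤ) :
    (List.ofFn f).tail = List.ofFn (fun j : Fin n => f j.succ) := by
  rw [List.ofFn_succ]; rfl

lemma D_ofFn_tail (a : ℕ → ℤ) (n : ℕ) (hn : 0 < n) :
    D (List.ofFn (fun j : Fin n => a j)).tail = Qc a n := by
  cases n with
  | zero => omega
  | succ n =>
    rw [ofFn_tail]
    have he : (fun j : Fin n => (fun j : Fin (n+1) => a (j:ℕ)) j.succ)
        = (fun j : Fin n => (fun i => a (i+1)) (j:ℕ)) := funext fun j => by simp [Fin.val_succ]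
    rw [he, D_ofFn n (fun i => a (i+1))]
    rfl

set_option maxHeartbeats 2000000 in
lemma class_bound {k m : ℕ} (l : Fin k → ℕ) (hl : ∀ i, 1 ≤ l i)
    (a : ∀ i, Fin (l i) → ℤ) (ha : ∀ i j, 2 ≤ a i j)
    (N : ∀ i : Fin k, Fin (l i) → Fin m → ℤ)
    (hGram : ∀ i j j', (∑ s, N i j s * N i j' s) = tridiag (a i) j j')
    (hCross : ∀ i i' : Fin k, i ≠ i' → ∀ j j', (∑ s, N i j s * N i' j' s) = 0)
    (s₀ : Fin m) (S : Finset (Fin k)) (hS : ∀ i ∈ S, N i ⟨0, hl i⟩ s₀ ≠ 0) :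
    ∑ i ∈ S, (D (List.ofFn (a i)).tail : ℝ) / (D (List.ofFn (a i)) : ℝ) ≤ 1 := by
  classical
  set aN : Fin k → ℕ → ℤ := fun i nn => if h : nn < l i then a i ⟨nn, h⟩ else 2 with haN_def
  have haN : ∀ i nn, 2 ≤ aN i nn := by
    intro i nn; rw [haN_def]; dsimp only; split
    · exact ha i _
    · exact le_refl 2
  have hfun : ∀ i, (fun j : Fin (l i) => aN i (j:ℕ)) = a i := by
    intro i; funext j; rw [haN_def]; dsimp only; rw [dif_pos j.isLt]
  set pI : Fin k → ℤ := fun i => Pc (aN i) (l i) with hpI_def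
  set qI : Fin k → ℤ := fun i => Qc (aN i) (l i) with hqI_def
  have hpIpos : ∀ i, 1 ≤ pI i := fun i => Pc_pos _ (haN i) _
  have hpIposR : ∀ i, (0:ℝ) < (pI i : ℝ) := fun i => by exact_mod_cast (by linarith [hpIpos i] : (0:ℤ) < pI i)
  have hDp : ∀ i, D (List.ofFn (a i)) = pI i := by
    intro i
    conv_lhs => rw [← hfun i]
    exact D_ofFn (l i) (aN i)
  have hDq : ∀ i, D (List.ofFn (a i)).tail = qI i := by
    intro i
    conv_lhs => rw [← hfun i]
    exact D_ofFn_tail (aN i) (l i) (hl i)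
  have hdetI : ∀ i, (tridiag (a i)).det = pI i := by
    intro i
    conv_lhs => rw [← hfun i]
    exact det_tridiag (aN i) (l i)
  set vI : ∀ i : Fin k, Fin (l i) → ℤ := fun i j => N i j s₀ with hvI_def
  set uI : ∀ i : Fin k, Fin (l i) → ℝ :=
    fun i j => ((pI i:ℝ))⁻¹ * ((((tridiag (a i)).adjugate *ᵥ vI i) j : ℤ) : ℝ) with huI_def
  have hTu : ∀ i, ((tridiag (a i)).map (Int.cast : ℤ → ℝ)) *ᵥ uI i = fun j => ((vI i j : ℤ) : ℝ) := by
    intro i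
    have h1 : ((tridiag (a i)).map (Int.cast : ℤ → ℝ)) *ᵥ (fun j => ((((tridiag (a i)).adjugate *ᵥ vI i) j : ℤ):ℝ))
        = fun j => ((pI i:ℝ) * ((vI i j : ℤ):ℝ)) := by
      rw [mulVec_cast]
      funext j
      rw [Matrix.mulVec_mulVec, Matrix.mul_adjugate, hdetI i]
      simp [Matrix.smul_mulVec]
    have h2 : uI i = ((pI i:ℝ))⁻¹ • (fun j => ((((tridiag (a i)).adjugate *ᵥ vI i) j : ℤ):ℝ)) := rfl
    rw [h2, Matrix.mulVec_smul, h1]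
    funext j
    rw [Pi.smul_apply, smul_eq_mul, ← mul_assoc, inv_mul_cancel₀ (ne_of_gt (hpIposR i)), one_mul]
  set SI : Fin k → ℝ := fun i => ∑ j, uI i j * ((vI i j : ℤ):ℝ) with hSI_def
  have hkey : ∀ i ∈ S, ((qI i:ℝ))/((pI i:ℝ)) ≤ SI i := by
    intro i hi
    have h0 : vI i ⟨0, hl i⟩ ≠ 0 := hS i hi
    have htri : tridiag (fun j : Fin (l i) => aN i (j:ℕ)) = tridiag (a i) :=
      congrArg tridiag (hfun i)
    have hres := key_lemma (aN i) (haN i) (l i) (hl i) (vI i) h0 (uI i) (by rw [htri]; exact hTu i)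
    exact hres.1
  set W : Fin k → Fin m → ℝ := fun i s => ∑ j, uI i j * ((N i j s : ℤ):ℝ) with hW_def
  have hWs₀ : ∀ i, W i s₀ = SI i := fun i => rfl
  have hWW : ∀ i i', (∑ s, W i s * W i' s) = if i = i' then SI i else 0 := by
    intro i i'
    have lhs_eq : ∑ s, W i s * W i' s
        = ∑ j, ∑ j', (uI i j * uI i' j') * ((∑ s, N i j s * N i' j' s : ℤ):ℝ) := by
      have e1 : ∀ s, W i s * W i' s = ∑ j, ∑ j', (uI i j * uI i' j') * ((N i j s * N i' j' s : ℤ):ℝ) := by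
        intro s
        rw [hW_def]
        dsimp only
        rw [Finset.sum_mul_sum]
        apply Finset.sum_congr rfl; intro j _
        apply Finset.sum_congr rfl; intro j' _
        push_cast
        ring
      rw [Finset.sum_congr rfl (fun s _ => e1 s)]
      rw [Finset.sum_comm]
      apply Finset.sum_congr rfl; intro j _
      rw [Finset.sum_comm]
      apply Finset.sum_congr rfl; intro j' _
      rw [← Finset.mul_sum]
      congr 1
      push_cast
      rfl
    rw [lhs_eq]
    by_cases hii : i = i'
    · subst hii
      rw [if_pos rfl]
      have hSIalt : SI i = ∑ j, ∑ j', (uI i j * uI i j') * ((tridiag (a i) j j' : ℤ):ℝ) := by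
        rw [hSI_def]
        dsimp only
        apply Finset.sum_congr rfl; intro j _
        have h3 : ((vI i j : ℤ):ℝ) = ∑ j', ((tridiag (a i) j j' : ℤ):ℝ) * uI i j' := by
          have h4 := congrFun (hTu i) j
          simp only [Matrix.mulVec, dotProduct, Matrix.map_apply] at h4
          exact h4.symm
        rw [h3, Finset.mul_sum]
        apply Finset.sum_congr rfl; intro j' _
        ring
      rw [hSIalt]
      apply Finset.sum_congr rfl; intro j _
      apply Finset.sum_congr rfl; intro j' _
      rw [hGram i j j']
    · rw [if_neg hii]
      apply Finset.sum_eq_zero; intro j _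
      apply Finset.sum_eq_zero; intro j' _
      rw [hCross i i' hii j j']
      norm_num
  have hSInonneg : ∀ i, 0 ≤ SI i := by
    intro i
    have h := hWW i i
    rw [if_pos rfl] at h
    rw [← h]
    exact Finset.sum_nonneg fun s _ => mul_self_nonneg _
  have hFnonneg : (0:ℝ) ≤ ∑ s, ((if s = s₀ then (1:ℝ) else 0) - ∑ i, W i s)^2 :=
    Finset.sum_nonneg fun s _ => sq_nonneg _
  have hexp1 : ∑ s : Fin m, (if s = s₀ then (1:ℝ) else 0)^2 = 1 := by
    rw [Finset.sum_congr rfl (fun s _ => by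
      show (if s = s₀ then (1:ℝ) else 0)^2 = (if s = s₀ then (1:ℝ) else 0)
      split <;> norm_num)]
    rw [Finset.sum_ite_eq' Finset.univ s₀ (fun _ => (1:ℝ))]
    simp
  have hexp2 : ∑ s : Fin m, (if s = s₀ then (1:ℝ) else 0) * (∑ i, W i s) = ∑ i, SI i := by
    rw [Finset.sum_congr rfl (fun s _ => by
      show (if s = s₀ then (1:ℝ) else 0) * (∑ i, W i s) = if s = s₀ then (∑ i, W i s) else 0
      split <;> ring)]
    rw [Finset.sum_ite_eq' Finset.univ s₀ (fun s => ∑ i, W i s)]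
    simp [hWs₀]
  have hexp3 : ∑ s : Fin m, (∑ i, W i s)^2 = ∑ i, SI i := by
    have e1 : ∀ s, (∑ i, W i s)^2 = ∑ i, ∑ i', W i s * W i' s := by
      intro s; rw [sq, Finset.sum_mul_sum]
    rw [Finset.sum_congr rfl (fun s _ => e1 s)]
    rw [Finset.sum_comm]
    apply Finset.sum_congr rfl; intro i _
    rw [Finset.sum_comm]
    rw [Finset.sum_congr rfl (fun i' _ => hWW i i')]
    rw [Finset.sum_ite_eq Finset.univ i (fun _ => SI i)]
    simp
  have hbound : ∑ i, SI i ≤ 1 := by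
    have hprep : ∑ s, ((if s = s₀ then (1:ℝ) else 0) - ∑ i, W i s)^2
        = (∑ s : Fin m, (if s = s₀ then (1:ℝ) else 0)^2)
          - 2 * (∑ s : Fin m, (if s = s₀ then (1:ℝ) else 0) * (∑ i, W i s))
          + ∑ s : Fin m, (∑ i, W i s)^2 := by
      have e2 : ∀ s, ((if s = s₀ then (1:ℝ) else 0) - ∑ i, W i s)^2
          = (if s = s₀ then (1:ℝ) else 0)^2 - 2*((if s = s₀ then (1:ℝ) else 0) * (∑ i, W i s)) + (∑ i, W i s)^2 := fun s => by ring
      rw [Finset.sum_congr rfl (fun s _ => e2 s), Finset.sum_add_distrib, Finset.sum_sub_distrib, ← Finset.mul_sum]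
    rw [hprep, hexp1, hexp2, hexp3] at hFnonneg
    linarith
  have hfinal : ∑ i ∈ S, ((qI i:ℝ))/((pI i:ℝ)) ≤ 1 := by
    calc ∑ i ∈ S, ((qI i:ℝ))/((pI i:ℝ)) ≤ ∑ i ∈ S, SI i := Finset.sum_le_sum hkey
      _ ≤ ∑ i, SI i := Finset.sum_le_sum_of_subset_of_nonneg (Finset.subset_univ S) (fun i _ _ => hSInonneg i)
      _ ≤ 1 := hbound
  rw [Finset.sum_congr rfl (fun i (_ : i ∈ S) => by rw [hDq i, hDp i])]
  exact hfinal

/-- If the star-shaped plumbing lattice `(ℤ^{1+Σlᵢ}, Q_Γ(e))` embeds into a standard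
diagonal lattice, then `{1,…,k}` can be partitioned into at most `e` nonempty classes
such that `∑_{i∈C} qᵢ/pᵢ ≤ 1` for each class `C`. -/
theorem stmt12 (k : ℕ) (hk : 3 ≤ k) (e : ℤ) (he : 1 ≤ e)
    (l : Fin k → ℕ) (hl : ∀ i, 1 ≤ l i)
    (a : ∀ i, Fin (l i) → ℤ) (ha : ∀ i j, 2 ≤ a i j)
    (m : ℕ) (hm : 1 ≤ m) (M : Matrix (Option (Σ i, Fin (l i))) (Fin m) ℤ)
    (hM : M * M.transpose = QGamma e l a) :
    ∃ P : Finset (Finset (Fin k)),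
      (P.card : ℤ) ≤ e ∧
      (∀ C ∈ P, C.Nonempty) ∧
      (∀ C ∈ P, ∀ C' ∈ P, C ≠ C' → Disjoint C C') ∧
      (∀ i : Fin k, ∃ C ∈ P, i ∈ C) ∧
      (∀ C ∈ P, ∑ i ∈ C,
        (D (List.ofFn (a i)).tail : ℝ) / (D (List.ofFn (a i)) : ℝ) ≤ 1) := by
  classical
  have hMM : ∀ r s, (∑ t, M r t * M s t) = QGamma e l a r s := by
    intro r s
    have h := congrFun (congrFun hM r) s
    simpa [Matrix.mul_apply, Matrix.transpose_apply] using h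
  set C : Fin m → ℤ := fun s => M none s with hC_def
  set N : ∀ i : Fin k, Fin (l i) → Fin m → ℤ := fun i j s => M (some ⟨i, j⟩) s with hN_def
  have hce : (∑ s, C s * C s) = e := hMM none none
  have hcx : ∀ i : Fin k, (∑ s, C s * N i ⟨0, hl i⟩ s) = -1 := by
    intro i
    have h := hMM none (some ⟨i, ⟨0, hl i⟩⟩)
    rw [h]
    rfl
  have hGram : ∀ i j j', (∑ s, N i j s * N i j' s) = tridiag (a i) j j' := by
    intro i j j'
    have h := hMM (some ⟨i, j⟩) (some ⟨i, j'⟩)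
    rw [h]
    show (if hh : i = i then tridiag (a i) j (Fin.cast (by rw [hh]) j') else 0) = _
    rw [dif_pos rfl]
    rfl
  have hCross : ∀ i i' : Fin k, i ≠ i' → ∀ j j', (∑ s, N i j s * N i' j' s) = 0 := by
    intro i i' hii j j'
    have h := hMM (some ⟨i, j⟩) (some ⟨i', j'⟩)
    rw [h]
    show (if hh : i = i' then _ else (0:ℤ)) = 0
    rw [dif_neg hii]
  have hchoice : ∀ i : Fin k, ∃ s : Fin m, C s ≠ 0 ∧ N i ⟨0, hl i⟩ s ≠ 0 := by
    intro i
    by_contra hno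
    push_neg at hno
    have hz : (∑ s, C s * N i ⟨0, hl i⟩ s) = 0 := by
      apply Finset.sum_eq_zero
      intro s _
      by_cases h : C s = 0
      · rw [h, zero_mul]
      · rw [hno s h, mul_zero]
    rw [hcx i] at hz
    norm_num at hz
  choose g hg1 hg2 using hchoice
  set P : Finset (Finset (Fin k)) :=
    (Finset.univ.image g).image (fun s => Finset.univ.filter (fun i => g i = s)) with hP_def
  refine ⟨P, ?_, ?_, ?_, ?_, ?_⟩
  · -- cardinality
    have h1 : P.card ≤ (Finset.univ.image g).card := Finset.card_image_le
    have h2 : (Finset.univ.image g) ⊆ Finset.univ.filter (fun s => C s ≠ 0) := by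
      intro s hs
      rw [Finset.mem_image] at hs
      obtain ⟨i, _, rfl⟩ := hs
      exact Finset.mem_filter.mpr ⟨Finset.mem_univ _, hg1 i⟩
    have h3 : (Finset.univ.image g).card ≤ (Finset.univ.filter (fun s => C s ≠ 0)).card :=
      Finset.card_le_card h2
    have h4 : ((Finset.univ.filter (fun s => C s ≠ 0)).card : ℤ)
        ≤ ∑ s ∈ Finset.univ.filter (fun s => C s ≠ 0), C s * C s := by
      rw [Finset.card_eq_sum_ones]
      push_cast
      apply Finset.sum_le_sum
      intro s hs
      have hns : C s ≠ 0 := (Finset.mem_filter.mp hs).2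
      have habs : 1 ≤ |C s| := Int.one_le_abs hns
      calc (1:ℤ) = 1 * 1 := by ring
        _ ≤ |C s| * |C s| := mul_le_mul habs habs (by norm_num) (abs_nonneg _)
        _ = C s * C s := abs_mul_abs_self _
    have h5 : ∑ s ∈ Finset.univ.filter (fun s => C s ≠ 0), C s * C s ≤ ∑ s, C s * C s :=
      Finset.sum_le_sum_of_subset_of_nonneg (Finset.filter_subset _ _) (fun s _ _ => mul_self_nonneg _)
    have h6 : (P.card : ℤ) ≤ ((Finset.univ.filter (fun s => C s ≠ 0)).card : ℤ) := by
      exact_mod_cast le_trans h1 h3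
    rw [← hce]
    linarith
  · -- nonempty
    intro Cl hCl
    rw [hP_def, Finset.mem_image] at hCl
    obtain ⟨s, hs, rfl⟩ := hCl
    rw [Finset.mem_image] at hs
    obtain ⟨i, _, rfl⟩ := hs
    exact ⟨i, Finset.mem_filter.mpr ⟨Finset.mem_univ _, rfl⟩⟩
  · -- disjoint
    intro Cl hCl Cl' hCl' hne
    rw [hP_def, Finset.mem_image] at hCl hCl'
    obtain ⟨s, _, rfl⟩ := hCl
    obtain ⟨s', _, rfl⟩ := hCl'
    rw [Finset.disjoint_left]
    intro i hi hi'
    have h1 : g i = s := (Finset.mem_filter.mp hi).2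
    have h2 : g i = s' := (Finset.mem_filter.mp hi').2
    exact hne (by rw [← h1, h2])
  · -- cover
    intro i
    refine ⟨Finset.univ.filter (fun i' => g i' = g i), ?_, Finset.mem_filter.mpr ⟨Finset.mem_univ _, rfl⟩⟩
    rw [hP_def]
    exact Finset.mem_image.mpr ⟨g i, Finset.mem_image.mpr ⟨i, Finset.mem_univ _, rfl⟩, rfl⟩
  · -- the bound
    intro Cl hCl
    rw [hP_def, Finset.mem_image] at hCl
    obtain ⟨s, _, rfl⟩ := hCl
    apply class_bound l hl a ha N hGram hCross s
    intro i hi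
    have h1 : g i = s := (Finset.mem_filter.mp hi).2
    rw [← h1]
    exact hg2 i
end

section
/- Let Q be the 9×9 star-shaped plumbing matrix Q_Γ(1) with central weight 1 and three chains with weight sequences (3), (5) and (3, 2, 2, 2, 2, 2) (this is the intersection matrix of the positive definite plumbing bounded by the Seifert fibered integral homology sphere S²(1; 3, 5, 13/6), since [3,2,2,2,2,2]^- = 13/6). Then there is no m ≥ 1 and no 9×m integer matrix M with M·Mᵀ = Q; that is, this plumbing lattice does not embed into any standard diagonal lattice. (Hence the converse of Theorem 1.1 fails: 1/3 + 1/5 + 6/13 ≤ 1 holds, yet no embedding exists.) -/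
open Matrix

/-- The 9×9 star-shaped plumbing matrix `Q_Γ(1)` with central weight `1` and three
chains with weight sequences `(3)`, `(5)` and `(3, 2, 2, 2, 2, 2)`: the intersection
matrix of the positive definite plumbing bounded by `S²(1; 3, 5, 13/6)`.
Vertex order: central vertex, chain 1, chain 2, chain 3. -/
def Q17 : Matrix (Fin 9) (Fin 9) ℤ :=
  !![ 1, -1, -1, -1,  0,  0,  0,  0,  0;
     -1,  3,  0,  0,  0,  0,  0,  0,  0;
     -1,  0,  5,  0,  0,  0,  0,  0,  0;
     -1,  0,  0,  3, -1,  0,  0,  0,  0;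
      0,  0,  0, -1,  2, -1,  0,  0,  0;
      0,  0,  0,  0, -1,  2, -1,  0,  0;
      0,  0,  0,  0,  0, -1,  2, -1,  0;
      0,  0,  0,  0,  0,  0, -1,  2, -1;
      0,  0,  0,  0,  0,  0,  0, -1,  2]

/-- Basis of the orthogonal complement of the first basis vector (which has norm 1)
inside the lattice `(ℤ⁹, Q17)`. -/
def B17 : Matrix (Fin 8) (Fin 9) ℤ :=
  !![1, 1, 0, 0, 0, 0, 0, 0, 0;
     1, 0, 1, 0, 0, 0, 0, 0, 0;
     1, 0, 0, 1, 0, 0, 0, 0, 0;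
     0, 0, 0, 0, 1, 0, 0, 0, 0;
     0, 0, 0, 0, 0, 1, 0, 0, 0;
     0, 0, 0, 0, 0, 0, 1, 0, 0;
     0, 0, 0, 0, 0, 0, 0, 1, 0;
     0, 0, 0, 0, 0, 0, 0, 0, 1]

/-- The Gram matrix of this complement: an even unimodular positive definite
rank-8 lattice (a Gram matrix of `E₈`). -/
def G17 : Matrix (Fin 8) (Fin 8) ℤ :=
  !![ 2, -1, -1,  0,  0,  0,  0,  0;
     -1,  4, -1,  0,  0,  0,  0,  0;
     -1, -1,  2, -1,  0,  0,  0,  0;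
      0,  0, -1,  2, -1,  0,  0,  0;
      0,  0,  0, -1,  2, -1,  0,  0;
      0,  0,  0,  0, -1,  2, -1,  0;
      0,  0,  0,  0,  0, -1,  2, -1;
      0,  0,  0,  0,  0,  0, -1,  2]

/-- The (integral) inverse of `G17`. -/
def H17 : Matrix (Fin 8) (Fin 8) ℤ :=
  !![22, 13, 30, 25, 20, 15, 10, 5;
     13,  8, 18, 15, 12,  9,  6, 3;
     30, 18, 42, 35, 28, 21, 14, 7;
     25, 15, 35, 30, 24, 18, 12, 6;
     20, 12, 28, 24, 20, 15, 10, 5;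
     15,  9, 21, 18, 15, 12,  8, 4;
     10,  6, 14, 12, 10,  8,  6, 3;
      5,  3,  7,  6,  5,  4,  3, 2]

lemma hBQB : B17 * Q17 * B17.transpose = G17 := by decide

lemma hGH : G17 * H17 = 1 := by decide

lemma hHsymm : H17.transpose = H17 := by decide

set_option maxRecDepth 100000 in
lemma hG2 : ∀ v : Fin 8 → ZMod 2,
    v ⬝ᵥ ((G17.map (Int.cast : ℤ → ZMod 2)) *ᵥ v) = 0 := by decide

/-- The quadratic form of `G17` is even. -/
lemma even_form (x : Fin 8 → ℤ) : Even (x ⬝ᵥ (G17 *ᵥ x)) := by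
  have h : ((x ⬝ᵥ (G17 *ᵥ x) : ℤ) : ZMod 2) = 0 := by
    have hmap := RingHom.map_dotProduct (Int.castRingHom (ZMod 2)) x (G17 *ᵥ x)
    have hmv : ((Int.castRingHom (ZMod 2)) ∘ (G17 *ᵥ x)) =
        (G17.map (Int.cast : ℤ → ZMod 2)) *ᵥ ((Int.castRingHom (ZMod 2)) ∘ x) := by
      funext i
      exact RingHom.map_mulVec (Int.castRingHom (ZMod 2)) G17 x i
    rw [show ((x ⬝ᵥ (G17 *ᵥ x) : ℤ) : ZMod 2)
        = (Int.castRingHom (ZMod 2)) (x ⬝ᵥ (G17 *ᵥ x)) from rfl, hmap, hmv]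
    exact hG2 _
  obtain ⟨t, ht⟩ := (ZMod.intCast_zmod_eq_zero_iff_dvd _ 2).mp h
  exact ⟨t, by omega⟩

/-- The plumbing lattice of `S²(1; 3, 5, 13/6)` does not embed into any standard
diagonal lattice: there is no integer matrix `M` with `M·Mᵀ = Q_Γ(1)`. -/
theorem stmt17 :
    ¬ ∃ (m : ℕ) (_ : 1 ≤ m) (M : Matrix (Fin 9) (Fin m) ℤ),
      M * M.transpose = Q17 := by
  rintro ⟨m, -, M, hM⟩
  set N : Matrix (Fin 8) (Fin m) ℤ := B17 * M with hN
  have hG : N * N.transpose = G17 := by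
    rw [hN, transpose_mul, show B17 * M * (M.transpose * B17.transpose)
      = B17 * (M * M.transpose) * B17.transpose by
        rw [Matrix.mul_assoc, Matrix.mul_assoc, Matrix.mul_assoc],
      hM, hBQB]
  -- every entry of N vanishes
  have key : ∀ (j : Fin m) (i : Fin 8), N i j = 0 := by
    intro j
    set w : Fin 8 → ℤ := fun i => N i j with hw
    set x : Fin 8 → ℤ := H17 *ᵥ w with hx
    set y : Fin m → ℤ := N.transpose *ᵥ x with hy
    have hwx : G17 *ᵥ x = w := by
      rw [hx, mulVec_mulVec, hGH, one_mulVec]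
    -- s := xᵀ G x equals Σ y k ^ 2
    have hs : x ⬝ᵥ (G17 *ᵥ x) = y ⬝ᵥ y := by
      rw [← hG, ← Matrix.mulVec_mulVec, dotProduct_mulVec, ← mulVec_transpose, ← hy]
    have hs_nonneg : 0 ≤ x ⬝ᵥ (G17 *ᵥ x) := by
      rw [hs]
      exact Finset.sum_nonneg fun k _ => mul_self_nonneg (y k)
    -- y j = x ⬝ᵥ w = xᵀ G x
    have hyj : y j = x ⬝ᵥ (G17 *ᵥ x) := by
      rw [hwx]
      simp only [hy, hw, mulVec_transpose, vecMul, dotProduct, transpose_apply]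
    -- the norm of (δ_j - y) is 1 - xᵀGx
    have hub : x ⬝ᵥ (G17 *ᵥ x) ≤ 1 := by
      have hnn : 0 ≤ ∑ k, ((if k = j then (1 : ℤ) else 0) - y k)
          * ((if k = j then (1 : ℤ) else 0) - y k) :=
        Finset.sum_nonneg fun k _ => mul_self_nonneg _
      have hexp : ∑ k, ((if k = j then (1 : ℤ) else 0) - y k)
          * ((if k = j then (1 : ℤ) else 0) - y k)
          = 1 - 2 * y j + y ⬝ᵥ y := by
        have : ∀ k, ((if k = j then (1 : ℤ) else 0) - y k)
            * ((if k = j then (1 : ℤ) else 0) - y k)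
            = ((if k = j then (1 : ℤ) else 0) - 2 * (if k = j then y k else 0)
              + y k * y k) := by
          intro k
          by_cases h : k = j <;> simp [h] <;> ring
        rw [Finset.sum_congr rfl fun k _ => this k, Finset.sum_add_distrib,
          Finset.sum_sub_distrib, ← Finset.mul_sum, Finset.sum_ite_eq',
          Finset.sum_ite_eq']
        simp [dotProduct]
      rw [hexp, hyj, ← hs] at hnn
      linarith
    -- evenness forces xᵀGx = 0
    obtain ⟨t, ht⟩ := even_form x
    have hzero : x ⬝ᵥ (G17 *ᵥ x) = 0 := by omega
    -- hence y = 0 and then w = 0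
    have hy0 : ∀ k, y k = 0 := by
      intro k
      have hsum : ∑ k, y k * y k = 0 := by
        have := hs.symm.trans hzero
        simpa [dotProduct] using this
      have := (Finset.sum_eq_zero_iff_of_nonneg
        (fun k _ => mul_self_nonneg (y k))).mp hsum k (Finset.mem_univ k)
      exact mul_self_eq_zero.mp this
    intro i
    have : w = 0 := by
      rw [← hwx, ← hG, ← Matrix.mulVec_mulVec, ← hy]
      have : y = 0 := funext hy0
      rw [this, mulVec_zero]
    exact congrFun this i
  -- contradiction: G17 0 0 = 2 but N = 0
  have hNzero : N = 0 := by
    ext i k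
    exact key k i
  rw [hNzero] at hG
  have h00 := congrFun (congrFun hG 0) 0
  simp [G17] at h00
end

section
/- Let Q be the 8×8 star-shaped plumbing matrix Q_Γ(2) with central weight 2 and three chains with weight sequences (2), (2, 2) and (2, 2, 2, 2) (this is the E_8 intersection matrix of the positive definite E_8 plumbing bounded by the Poincaré homology sphere S²(2; 2, 3/2, 5/4)). Then there is no m ≥ 1 and no 8×m integer matrix M with M·Mᵀ = Q; that is, the E_8 intersection form does not embed into any standard diagonal lattice. -/
open Matrix

/-- The 8×8 star-shaped plumbing matrix `Q_Γ(2)` with central weight `2` and three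
chains with weight sequences `(2)`, `(2, 2)` and `(2, 2, 2, 2)`: the `E_8` intersection
matrix of the positive definite `E_8` plumbing bounded by the Poincaré homology sphere
`S²(2; 2, 3/2, 5/4)`. Vertex order: central vertex, chain 1, chain 2, chain 3. -/
def QE8 : Matrix (Fin 8) (Fin 8) ℤ :=
  !![ 2, -1, -1,  0, -1,  0,  0,  0;
     -1,  2,  0,  0,  0,  0,  0,  0;
     -1,  0,  2, -1,  0,  0,  0,  0;
      0,  0, -1,  2,  0,  0,  0,  0;
     -1,  0,  0,  0,  2, -1,  0,  0;
      0,  0,  0,  0, -1,  2, -1,  0;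
      0,  0,  0,  0,  0, -1,  2, -1;
      0,  0,  0,  0,  0,  0, -1,  2]

/-- The inverse of `QE8`, an integer matrix since `det QE8 = 1`. -/
def RE8 : Matrix (Fin 8) (Fin 8) ℤ :=
  !![30, 15, 20, 10, 24, 18, 12, 6;
     15,  8, 10,  5, 12,  9,  6, 3;
     20, 10, 14,  7, 16, 12,  8, 4;
     10,  5,  7,  4,  8,  6,  4, 2;
     24, 12, 16,  8, 20, 15, 10, 5;
     18,  9, 12,  6, 15, 12,  8, 4;
     12,  6,  8,  4, 10,  8,  6, 3;
      6,  3,  4,  2,  5,  4,  3, 2]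

/-- Upper-triangular "half" of `QE8`: `QE8 = BE8 + BE8ᵀ`. -/
def BE8 : Matrix (Fin 8) (Fin 8) ℤ :=
  !![ 1, -1, -1,  0, -1,  0,  0,  0;
      0,  1,  0,  0,  0,  0,  0,  0;
      0,  0,  1, -1,  0,  0,  0,  0;
      0,  0,  0,  1,  0,  0,  0,  0;
      0,  0,  0,  0,  1, -1,  0,  0;
      0,  0,  0,  0,  0,  1, -1,  0;
      0,  0,  0,  0,  0,  0,  1, -1;
      0,  0,  0,  0,  0,  0,  0,  1]

set_option maxHeartbeats 1000000 in
lemma hQR : QE8 * RE8 = 1 := by decide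

set_option maxHeartbeats 1000000 in
lemma hRQ : RE8 * QE8 = 1 := by decide

lemma hRsym : RE8ᵀ = RE8 := by decide

lemma hQB : QE8 = BE8 + BE8ᵀ := by decide

/-- `QE8` is even: `cᵀ Q c` is even for every integer vector `c`. -/
lemma QE8_even (c : Fin 8 → ℤ) : Even (c ⬝ᵥ QE8.mulVec c) := by
  have h : c ⬝ᵥ BE8ᵀ.mulVec c = c ⬝ᵥ BE8.mulVec c := by
    rw [Matrix.dotProduct_mulVec, Matrix.vecMul_transpose, dotProduct_comm]
  refine ⟨c ⬝ᵥ BE8.mulVec c, ?_⟩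
  rw [hQB, Matrix.add_mulVec, dotProduct_add, h]

/-- The `E_8` intersection form does not embed into any standard diagonal lattice:
there is no integer matrix `M` with `M·Mᵀ = E_8`. -/
theorem stmt18 :
    ¬ ∃ (m : ℕ) (_ : 1 ≤ m) (M : Matrix (Fin 8) (Fin m) ℤ),
      M * M.transpose = QE8 := by
  rintro ⟨m, hm, M, hM⟩
  set N : Matrix (Fin 8) (Fin m) ℤ := RE8 * M with hN
  set P : Matrix (Fin m) (Fin m) ℤ := Mᵀ * N with hPdef
  have hPsym : Pᵀ = P := by
    rw [hPdef, hN, Matrix.transpose_mul, Matrix.transpose_mul, Matrix.transpose_transpose,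
      hRsym, Matrix.mul_assoc]
  have hsym' : ∀ i j, P j i = P i j := fun i j => congrFun (congrFun hPsym i) j
  have hMQ : QE8 * N = M := by
    rw [hN, ← Matrix.mul_assoc, hQR, Matrix.one_mul]
  have hPP : P * P = P := by
    rw [hPdef]
    calc Mᵀ * N * (Mᵀ * N)
        = Mᵀ * (RE8 * ((M * Mᵀ) * N)) := by
          rw [hN]; simp only [Matrix.mul_assoc]
      _ = Mᵀ * N := by
          rw [hM, hN, ← Matrix.mul_assoc QE8, hQR, Matrix.one_mul]
  have htr : P.trace = 8 := by
    rw [hPdef, Matrix.trace_mul_comm, hN, Matrix.mul_assoc, hM, hRQ]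
    simp
  have hdiag : ∀ i, P i i = 0 := by
    intro i
    have h1 : P i i = ∑ j, (P i j) ^ 2 := by
      conv_lhs => rw [← hPP]
      rw [Matrix.mul_apply]
      exact Finset.sum_congr rfl fun j _ => by rw [hsym' i j]; ring
    have hnn : 0 ≤ P i i := h1 ▸ Finset.sum_nonneg fun j _ => sq_nonneg _
    have hP'sym : ∀ i j, (1 - P) j i = (1 - P) i j := by
      intro i j
      simp [Matrix.sub_apply, hsym' i j, Matrix.one_apply, eq_comm]
    have hP'P' : (1 - P) * (1 - P) = 1 - P := by
      rw [Matrix.sub_mul, Matrix.mul_sub, Matrix.mul_sub, hPP, Matrix.one_mul,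
        Matrix.mul_one, Matrix.one_mul]
      abel
    have h2 : (1 - P) i i = ∑ j, ((1 - P) i j) ^ 2 := by
      conv_lhs => rw [← hP'P']
      rw [Matrix.mul_apply]
      exact Finset.sum_congr rfl fun j _ => by rw [hP'sym i j]; ring
    have hle : P i i ≤ 1 := by
      have h0 : 0 ≤ (1 - P) i i := h2 ▸ Finset.sum_nonneg fun j _ => sq_nonneg _
      have h3 : (1 - P) i i = 1 - P i i := by
        simp [Matrix.sub_apply, Matrix.one_apply_eq]
      omega
    have heven : Even (P i i) := by
      have key : P i i = (fun a => N a i) ⬝ᵥ QE8.mulVec (fun a => N a i) := by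
        rw [hPdef, Matrix.mul_apply]
        have : ∀ a, Mᵀᵀ a i = (QE8 * N) a i := by
          intro a; rw [Matrix.transpose_transpose, ← hMQ]
        calc ∑ a, Mᵀ i a * N a i
            = ∑ a, (QE8 * N) a i * N a i := by
              refine Finset.sum_congr rfl fun a _ => ?_
              rw [show Mᵀ i a = M a i from rfl, ← hMQ]
          _ = (fun a => N a i) ⬝ᵥ QE8.mulVec (fun a => N a i) := by
              simp only [dotProduct, Matrix.mulVec, Matrix.mul_apply]
              exact Finset.sum_congr rfl fun a _ => mul_comm _ _
      rw [key]
      exact QE8_even _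
    obtain ⟨k, hk⟩ := heven
    omega
  have h0 : P.trace = 0 := by
    rw [Matrix.trace]
    simp [Matrix.diag, hdiag]
  rw [h0] at htr
  exact absurd htr (by decide)
end
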